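/- arXiv:0902.1717 — 6 statements merged into one kernel-verified Lean document; each statement's English description precedes it below -/
import Mathlib

section
/- Let f ∈ L¹(ℝ) be nonnegative with #crests(f) = N (a finite positive integer). Then for every z > 0, |f̂(z)| ≤ N·π·√10 · ∫₀^{1/z} f*(x) dx, where f* is the decreasing rearrangement of f. -/
open MeasureTheory Real Set
open scoped ENNReal NNReal

/-- The Fourier transform on the line: `f̂(z) = ∫ f(x) e^{-ixz} dx`. -/
noncomputable def fourierTransform (f : ℝ → ℝ) (z : ℝ) : ℂ :=
  ∫ x : ℝ, (f x : ℂ) * Complex.exp (-(x * z) * Complex.I)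

/-- The decreasing rearrangement `f*(x) = inf {α > 0 : |{t : |f t| > α}| ≤ x}`. -/
noncomputable def decreasingRearrangement (f : ℝ → ℝ) (x : ℝ) : ℝ :=
  sInf {α : ℝ | 0 < α ∧ volume {t : ℝ | α < |f t|} ≤ ENNReal.ofReal x}

/-- A nonnegative function crests once: increasing up to some `b`, decreasing afterwards. -/
def CrestsOnce (f : ℝ → ℝ) : Prop :=
  ∃ b : ℝ, MonotoneOn f (Set.Iic b) ∧ AntitoneOn f (Set.Ici b)


lemma normsq_exp_im (w : ℝ) : ‖Complex.exp (w * Complex.I)‖ = 1 := by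
  rw [Complex.norm_exp]; simp

lemma lemA {z a c : ℝ} (hz : 0 < z) (hac : a ≤ c) :
    ‖∫ x in Ioo a c, Complex.exp (-(x*z)*Complex.I)‖ ≤ min (c - a) (2/z) := by
  have h1 : ∫ x in Ioo a c, Complex.exp (-(x*z)*Complex.I)
      = ∫ x in a..c, Complex.exp (-(x*z)*Complex.I) := by
    rw [intervalIntegral.integral_of_le hac, ← integral_Ioc_eq_integral_Ioo]
  have hcne : (-(z:ℂ)*Complex.I) ≠ 0 := by
    simp [Complex.ext_iff, hz.ne']
  have h2 : ∫ x in a..c, Complex.exp (-(x*z)*Complex.I)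
      = (Complex.exp ((-(z:ℂ)*Complex.I) * c) - Complex.exp ((-(z:ℂ)*Complex.I) * a)) / (-(z:ℂ)*Complex.I) := by
    rw [← integral_exp_mul_complex hcne]
    apply intervalIntegral.integral_congr
    intro x hx
    ring_nf
  apply le_min
  · rw [h1]
    have := intervalIntegral.norm_integral_le_of_norm_le_const (C := 1)
      (f := fun x : ℝ => Complex.exp (-(x*z)*Complex.I)) (a := a) (b := c) ?_
    · calc ‖∫ x in a..c, Complex.exp (-(x*z)*Complex.I)‖ ≤ 1 * |c - a| := this
        _ = c - a := by rw [one_mul, abs_of_nonneg (by linarith)]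
    · intro x _
      have : -(x*z)*Complex.I = ((-(x*z) : ℝ) : ℂ) * Complex.I := by push_cast; ring
      show ‖Complex.exp (-(x*z)*Complex.I)‖ ≤ 1
      rw [this]
      rw [normsq_exp_im]
  · rw [h1, h2]
    have hnum : ‖Complex.exp ((-(z:ℂ)*Complex.I) * c) - Complex.exp ((-(z:ℂ)*Complex.I) * a)‖ ≤ 2 := by
      refine (norm_sub_le _ _).trans ?_
      have e1 : ∀ t : ℝ, ‖Complex.exp ((-(z:ℂ)*Complex.I) * t)‖ = 1 := by
        intro t
        have : (-(z:ℂ)*Complex.I) * t = ((-(z*t) : ℝ) : ℂ) * Complex.I := by push_cast; ring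
        rw [this]; rw [normsq_exp_im]
      rw [e1, e1]; norm_num
    rw [norm_div]
    have hden : ‖(-(z:ℂ)*Complex.I)‖ = z := by
      simp [abs_of_pos hz]
    rw [hden, div_le_div_iff₀ (by positivity) (by positivity)] at *
    nlinarith [hnum]

lemma lemB {s : Set ℝ} (hoc : s.OrdConnected) (hne : s.Nonempty) (hfin : volume s ≠ ⊤) :
    sInf s ≤ sSup s ∧ Ioo (sInf s) (sSup s) ⊆ s ∧ s ⊆ Icc (sInf s) (sSup s) ∧
      volume s = ENNReal.ofReal (sSup s - sInf s) := by
  have hbA : BddAbove s := by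
    by_contra hB
    obtain ⟨m, hm⟩ := hne
    have hsub : Ici m ⊆ s := by
      intro y hy
      obtain ⟨e, he, hye⟩ := not_bddAbove_iff.mp hB y
      exact hoc.out hm he ⟨hy, hye.le⟩
    exact hfin (top_le_iff.mp (by rw [← Real.volume_Ici (a := m)]; exact measure_mono hsub))
  have hbB : BddBelow s := by
    by_contra hB
    obtain ⟨m, hm⟩ := hne
    have hsub : Iic m ⊆ s := by
      intro y hy
      obtain ⟨e, he, hye⟩ := not_bddBelow_iff.mp hB y
      exact hoc.out he hm ⟨hye.le, hy⟩
    exact hfin (top_le_iff.mp (by rw [← Real.volume_Iic (a := m)]; exact measure_mono hsub))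
  have h1 : sInf s ≤ sSup s := Real.sInf_le_sSup s hbB hbA
  have h2 : Ioo (sInf s) (sSup s) ⊆ s := by
    intro x hx
    obtain ⟨u, hu, hux⟩ := exists_lt_of_csInf_lt hne hx.1
    obtain ⟨v, hv, hxv⟩ := exists_lt_of_lt_csSup hne hx.2
    exact hoc.out hu hv ⟨hux.le, hxv.le⟩
  have h4 : s ⊆ Icc (sInf s) (sSup s) := fun x hx => ⟨csInf_le hbB hx, le_csSup hbA hx⟩
  refine ⟨h1, h2, h4, le_antisymm ?_ ?_⟩
  · calc volume s ≤ volume (Icc (sInf s) (sSup s)) := measure_mono h4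
      _ = ENNReal.ofReal (sSup s - sInf s) := Real.volume_Icc
  · calc ENNReal.ofReal (sSup s - sInf s) = volume (Ioo (sInf s) (sSup s)) := Real.volume_Ioo.symm
      _ ≤ volume s := measure_mono h2

lemma lemC {z : ℝ} (hz : 0 < z) {s : Set ℝ} (hoc : s.OrdConnected) (hfin : volume s ≠ ⊤) :
    (‖∫ x in s, Complex.exp (-(x*z)*Complex.I)‖₊ : ℝ≥0∞) ≤
      min (volume s) (ENNReal.ofReal (2/z)) := by
  rcases s.eq_empty_or_nonempty with rfl | hne
  · simp
  obtain ⟨h1, h2, h4, h3⟩ := lemB hoc hne hfin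
  have hae : s =ᵐ[volume] Ioo (sInf s) (sSup s) := by
    apply MeasureTheory.ae_eq_set.mpr
    constructor
    · refine measure_mono_null (fun x hx => ?_) (((Set.finite_singleton (sInf s)).insert (sSup s)).measure_zero volume)
      have hmem : x ∈ Icc (sInf s) (sSup s) \ Ioo (sInf s) (sSup s) := ⟨h4 hx.1, hx.2⟩
      rw [Icc_diff_Ioo_same h1] at hmem
      rcases hmem with h | h
      · exact Set.mem_insert_iff.mpr (Or.inr (by simpa using h))
      · exact Set.mem_insert_iff.mpr (Or.inl (by simpa using h))
    · rw [Set.diff_eq_empty.mpr h2]; simp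
  have hint : ∫ x in s, Complex.exp (-(x*z)*Complex.I)
      = ∫ x in Ioo (sInf s) (sSup s), Complex.exp (-(x*z)*Complex.I) :=
    MeasureTheory.setIntegral_congr_set hae
  have hA := lemA (a := sInf s) (c := sSup s) hz h1
  rw [← hint] at hA
  calc (‖∫ x in s, Complex.exp (-(x*z)*Complex.I)‖₊ : ℝ≥0∞)
      = ENNReal.ofReal ‖∫ x in s, Complex.exp (-(x*z)*Complex.I)‖ :=
        (ofReal_norm _).symm
    _ ≤ ENNReal.ofReal (min (sSup s - sInf s) (2/z)) := ENNReal.ofReal_le_ofReal hA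
    _ ≤ min (volume s) (ENNReal.ofReal (2/z)) := by
        rw [h3]
        exact le_min (ENNReal.ofReal_le_ofReal (min_le_left _ _))
          (ENNReal.ofReal_le_ofReal (min_le_right _ _))



lemma crest_ordConnected {g : ℝ → ℝ} (hc : CrestsOnce g) (α : ℝ) :
    OrdConnected {x | α < g x} := by
  obtain ⟨b, hm, ha⟩ := hc
  refine ordConnected_def.mpr fun x hx w hw y hy => ?_
  rcases le_or_gt y b with hyb | hyb
  · have hxb : x ≤ b := le_trans hy.1 hyb
    exact lt_of_lt_of_le hx (hm hxb hyb hy.1)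
  · have hwb : b ≤ w := le_trans hyb.le hy.2
    exact lt_of_lt_of_le hw (ha hyb.le hwb hy.2)

lemma crest_measurable {g : ℝ → ℝ} (hc : CrestsOnce g) : Measurable g :=
  measurable_of_Ioi fun α => (crest_ordConnected hc α).measurableSet

lemma lint_ofReal_eq {g : ℝ → ℝ} (h0 : ∀ x, 0 ≤ g x) :
    ∀ x, ENNReal.ofReal (g x) = (‖g x‖₊ : ℝ≥0∞) := by
  intro x
  rw [← enorm_eq_nnnorm, ← ofReal_norm, Real.norm_eq_abs, abs_of_nonneg (h0 x)]

lemma layercake_lt_top {g : ℝ → ℝ} (hg : Integrable g) (h0 : ∀ x, 0 ≤ g x) :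
    ∫⁻ α in Ioi (0:ℝ), volume {x | α < g x} < ⊤ := by
  rw [← MeasureTheory.lintegral_eq_lintegral_meas_lt volume (Filter.Eventually.of_forall h0)
    hg.aemeasurable]
  calc ∫⁻ x, ENNReal.ofReal (g x) = ∫⁻ x, (‖g x‖₊ : ℝ≥0∞) := by
        apply lintegral_congr; exact lint_ofReal_eq h0
    _ < ⊤ := hg.hasFiniteIntegral

lemma superlevel_finite {g : ℝ → ℝ} (hg : Integrable g) (h0 : ∀ x, 0 ≤ g x) {α : ℝ}
    (hα : 0 < α) : volume {x | α < g x} ≠ ⊤ := by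
  have h1 : volume {x | α < g x} ≤ volume {x | ENNReal.ofReal α ≤ ENNReal.ofReal (g x)} := by
    apply measure_mono
    intro x hx
    exact ENNReal.ofReal_le_ofReal (le_of_lt hx)
  have h2 := MeasureTheory.meas_ge_le_lintegral_div
    (μ := volume) (f := fun x => ENNReal.ofReal (g x))
    (hg.aemeasurable.ennreal_ofReal) (ε := ENNReal.ofReal α)
    (by simpa using hα) ENNReal.ofReal_ne_top
  have h3 : ∫⁻ x, ENNReal.ofReal (g x) < ⊤ := by
    calc ∫⁻ x, ENNReal.ofReal (g x) = ∫⁻ x, (‖g x‖₊ : ℝ≥0∞) := by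
          apply lintegral_congr; exact lint_ofReal_eq h0
      _ < ⊤ := hg.hasFiniteIntegral
  refine ne_top_of_le_ne_top ?_ (h1.trans h2)
  exact (ENNReal.div_lt_top h3.ne (by simpa using hα)).ne

lemma ennreal_min_two_mul {a b : ℝ≥0∞} : min a (2*b) ≤ 2 * min a b := by
  rcases le_total a b with h | h
  · calc min a (2*b) ≤ a := min_le_left _ _
      _ ≤ 2 * a := le_mul_of_one_le_left (zero_le) one_le_two
      _ = 2 * min a b := by rw [min_eq_left h]
  · calc min a (2*b) ≤ 2*b := min_le_right _ _
      _ = 2 * min a b := by rw [min_eq_right h]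

lemma fourier_layercake {g : ℝ → ℝ} (hg : Integrable g) (h0 : ∀ x, 0 ≤ g x) (hgm : Measurable g)
    {z : ℝ} (hz : 0 < z) :
    fourierTransform g z = ∫ α in Ioi (0:ℝ), ∫ x : ℝ,
      (if α < g x then Complex.exp (-(x * z) * Complex.I) else 0) := by
  set e : ℝ → ℂ := fun x => Complex.exp (-(x * z) * Complex.I) with he
  set f₂ : ℝ → ℝ → ℂ := fun α x => if α < g x then e x else 0 with hf₂
  have hS : MeasurableSet {p : ℝ × ℝ | p.1 < g p.2} :=
    measurableSet_lt measurable_fst (hgm.comp measurable_snd)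
  have he_meas : Measurable e := by
    apply Complex.measurable_exp.comp
    fun_prop
  have hnorm : ∀ x : ℝ, ‖e x‖ = 1 := by
    intro x
    have : -((x:ℂ) * z) * Complex.I = ((-(x*z) : ℝ) : ℂ) * Complex.I := by push_cast; ring
    rw [he]; simp only []
    rw [this, Complex.norm_exp]
    simp
  have huncurry : Function.uncurry f₂ =
      Set.indicator {p : ℝ × ℝ | p.1 < g p.2} (fun p => e p.2) := by
    funext p
    rw [Set.indicator_apply]
    rfl
  have hFint : Integrable (Function.uncurry f₂) ((volume.restrict (Ioi (0:ℝ))).prod volume) := by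
    constructor
    · rw [huncurry]
      exact ((he_meas.comp measurable_snd).indicator hS).stronglyMeasurable.aestronglyMeasurable
    · rw [MeasureTheory.hasFiniteIntegral_def]
      have : ∀ p : ℝ × ℝ, ‖Function.uncurry f₂ p‖ₑ =
          Set.indicator {p : ℝ × ℝ | p.1 < g p.2} (fun _ => 1) p := by
        intro p
        rw [huncurry, Set.indicator_apply, Set.indicator_apply]
        by_cases hp : p ∈ {p : ℝ × ℝ | p.1 < g p.2}
        · simp only [if_pos hp]
          rw [← ofReal_norm, hnorm]
          simp
        · simp [hp]
      rw [lintegral_congr this, lintegral_indicator hS, setLIntegral_one]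
      rw [Measure.prod_apply hS]
      have hpre : ∀ α : ℝ, (Prod.mk α ⁻¹' {p : ℝ × ℝ | p.1 < g p.2}) = {x | α < g x} := by
        intro α; rfl
      simp_rw [hpre]
      calc ∫⁻ α in Ioi (0:ℝ), volume {x | α < g x}
          = ∫⁻ x, ENNReal.ofReal (g x) := (MeasureTheory.lintegral_eq_lintegral_meas_lt volume
            (Filter.Eventually.of_forall h0) hg.aemeasurable).symm
        _ = ∫⁻ x, (‖g x‖₊ : ℝ≥0∞) := by
            apply lintegral_congr
            intro x
            rw [← enorm_eq_nnnorm, ← ofReal_norm, Real.norm_eq_abs, abs_of_nonneg (h0 x)]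
        _ < ⊤ := hg.hasFiniteIntegral
  have hswap := MeasureTheory.integral_integral_swap hFint
  have hinner : ∀ x : ℝ, (∫ α in Ioi (0:ℝ), f₂ α x) = (g x : ℂ) * e x := by
    intro x
    have h1 : (fun α => f₂ α x) = Set.indicator (Iio (g x)) (fun _ => e x) := by
      funext α
      rw [Set.indicator_apply]
      rfl
    rw [h1, MeasureTheory.integral_indicator_const (e x) measurableSet_Iio]
    rw [measureReal_def, Measure.restrict_apply measurableSet_Iio, Set.Iio_inter_Ioi, Real.volume_Ioo]
    rw [sub_zero, ENNReal.toReal_ofReal (h0 x), Complex.real_smul]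
  calc fourierTransform g z = ∫ x : ℝ, (g x : ℂ) * e x := rfl
    _ = ∫ x : ℝ, ∫ α in Ioi (0:ℝ), f₂ α x := by
        apply integral_congr_ae
        exact Filter.Eventually.of_forall fun x => (hinner x).symm
    _ = ∫ α in Ioi (0:ℝ), ∫ x : ℝ, f₂ α x := hswap.symm


lemma crest_bound {g : ℝ → ℝ} (hg : Integrable g) (h0 : ∀ x, 0 ≤ g x) (hc : CrestsOnce g)
    {z : ℝ} (hz : 0 < z) :
    ENNReal.ofReal ‖fourierTransform g z‖ ≤
      2 * ∫⁻ α in Ioi (0:ℝ), min (volume {x | α < g x}) (ENNReal.ofReal (1/z)) := by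
  have hgm : Measurable g := crest_measurable hc
  rw [fourier_layercake hg h0 hgm hz]
  set G : ℝ → ℂ := fun α => ∫ x : ℝ, (if α < g x then Complex.exp (-(x * z) * Complex.I) else 0)
    with hG
  calc ENNReal.ofReal ‖∫ α in Ioi (0:ℝ), G α‖
      = (‖∫ α in Ioi (0:ℝ), G α‖₊ : ℝ≥0∞) := ofReal_norm _
    _ ≤ ∫⁻ α in Ioi (0:ℝ), (‖G α‖₊ : ℝ≥0∞) :=
        MeasureTheory.enorm_integral_le_lintegral_enorm _
    _ ≤ ∫⁻ α in Ioi (0:ℝ), min (volume {x | α < g x}) (ENNReal.ofReal (2/z)) := by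
        apply MeasureTheory.lintegral_mono_ae
        rw [MeasureTheory.ae_restrict_iff' measurableSet_Ioi]
        apply Filter.Eventually.of_forall
        intro α hα
        have hind : G α = ∫ x in {x | α < g x}, Complex.exp (-(x * z) * Complex.I) := by
          rw [hG]
          simp only []
          rw [← MeasureTheory.integral_indicator (show MeasurableSet {x | α < g x} from hgm measurableSet_Ioi)]
          apply integral_congr_ae
          apply Filter.Eventually.of_forall
          intro x
          rw [Set.indicator_apply]
          rfl
        rw [hind]
        exact lemC hz (crest_ordConnected hc α) (superlevel_finite hg h0 hα)
    _ ≤ ∫⁻ α in Ioi (0:ℝ), 2 * min (volume {x | α < g x}) (ENNReal.ofReal (1/z)) := by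
        apply MeasureTheory.lintegral_mono
        intro α
        have : ENNReal.ofReal (2/z) = 2 * ENNReal.ofReal (1/z) := by
          rw [← ENNReal.ofReal_ofNat, ← ENNReal.ofReal_mul (by norm_num)]
          congr 1
          ring
        rw [this]
        exact ennreal_min_two_mul
    _ = 2 * ∫⁻ α in Ioi (0:ℝ), min (volume {x | α < g x}) (ENNReal.ofReal (1/z)) :=
        MeasureTheory.lintegral_const_mul' 2 _ (by norm_num)

section rearr
variable {f : ℝ → ℝ}


lemma nu_antitone : Antitone (fun α => volume {t : ℝ | α < |f t|}) := by
  intro a b hab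
  exact measure_mono (fun t ht => lt_of_le_of_lt hab ht)

lemma nu_measurable : Measurable (fun α => volume {t : ℝ | α < |f t|}) :=
  Antitone.measurable nu_antitone

lemma dR_nonneg (x : ℝ) : 0 ≤ decreasingRearrangement f x :=
  Real.sInf_nonneg (fun α hα => hα.1.le)

lemma S_nonempty (hf : Integrable f) {x : ℝ} (hx : 0 < x) :
    {α : ℝ | 0 < α ∧ volume {t : ℝ | α < |f t|} ≤ ENNReal.ofReal x}.Nonempty := by
  set I : ℝ≥0∞ := ∫⁻ t, ENNReal.ofReal |f t| with hI
  have hIfin : I ≠ ⊤ := by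
    have : I = ∫⁻ t, (‖f t‖₊ : ℝ≥0∞) := by
      apply lintegral_congr
      intro t
      rw [← enorm_eq_nnnorm, ← ofReal_norm, Real.norm_eq_abs]
    rw [this]
    exact hf.hasFiniteIntegral.ne
  set α : ℝ := max 1 (I.toReal / x) with hα
  have hα1 : (1:ℝ) ≤ α := le_max_left _ _
  have hαpos : 0 < α := lt_of_lt_of_le one_pos hα1
  refine ⟨α, hαpos, ?_⟩
  have hmarkov : volume {t : ℝ | α < |f t|} ≤ I / ENNReal.ofReal α := by
    refine le_trans (measure_mono fun t ht => ?_) (MeasureTheory.meas_ge_le_lintegral_div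
      ((hf.abs.aemeasurable.ennreal_ofReal)) (by simpa using hαpos) ENNReal.ofReal_ne_top)
    exact ENNReal.ofReal_le_ofReal (le_of_lt ht)
  refine hmarkov.trans ?_
  rw [ENNReal.div_le_iff (by simpa using hαpos) ENNReal.ofReal_ne_top]
  calc I = ENNReal.ofReal I.toReal := (ENNReal.ofReal_toReal hIfin).symm
    _ ≤ ENNReal.ofReal (x * α) := by
        apply ENNReal.ofReal_le_ofReal
        calc I.toReal = x * (I.toReal / x) := by field_simp
          _ ≤ x * α := by
              apply mul_le_mul_of_nonneg_left (le_max_right _ _) hx.le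
    _ = ENNReal.ofReal x * ENNReal.ofReal α := ENNReal.ofReal_mul hx.le

lemma dR_level_eq (hf : Integrable f) {x : ℝ} (hx : 0 < x) :
    volume {α : ℝ | α ∈ Ioi (0:ℝ) ∧ ENNReal.ofReal x < volume {t : ℝ | α < |f t|}}
      = ENNReal.ofReal (decreasingRearrangement f x) := by
  set S := {α : ℝ | 0 < α ∧ volume {t : ℝ | α < |f t|} ≤ ENNReal.ofReal x} with hS
  have hSne : S.Nonempty := S_nonempty hf hx
  have hSbdd : BddBelow S := ⟨0, fun a ha => ha.1.le⟩
  have hd : decreasingRearrangement f x = sInf S := rfl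
  apply le_antisymm
  · calc volume {α : ℝ | α ∈ Ioi (0:ℝ) ∧ ENNReal.ofReal x < volume {t : ℝ | α < |f t|}}
        ≤ volume (Ioc (0:ℝ) (sInf S)) := by
          apply measure_mono
          rintro α ⟨hα0, hαx⟩
          refine ⟨hα0, le_csInf hSne fun b hb => ?_⟩
          by_contra hba
          push_neg at hba
          exact absurd (le_trans (nu_antitone hba.le) hb.2) (not_le.mpr hαx)
      _ = ENNReal.ofReal (decreasingRearrangement f x) := by
          rw [Real.volume_Ioc, sub_zero, hd]
  · calc ENNReal.ofReal (decreasingRearrangement f x)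
        = volume (Ioo (0:ℝ) (sInf S)) := by rw [Real.volume_Ioo, sub_zero, hd]
      _ ≤ volume {α : ℝ | α ∈ Ioi (0:ℝ) ∧ ENNReal.ofReal x < volume {t : ℝ | α < |f t|}} := by
          apply measure_mono
          rintro α ⟨hα0, hαs⟩
          refine ⟨hα0, ?_⟩
          by_contra hle
          push_neg at hle
          exact absurd (csInf_le hSbdd ⟨hα0, hle⟩) (not_le.mpr hαs)
end rearr

section rearr2
variable {f : ℝ → ℝ}

lemma min_ofReal {v T : ℝ} (hv : 0 ≤ v) (hT : 0 ≤ T) :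
    min (ENNReal.ofReal v) (ENNReal.ofReal T) = ENNReal.ofReal (min v T) := by
  rcases le_total v T with h | h
  · rw [min_eq_left (ENNReal.ofReal_le_ofReal h), min_eq_left h]
  · rw [min_eq_right (ENNReal.ofReal_le_ofReal h), min_eq_right h]

lemma section_vol {T : ℝ} (hT : 0 < T) (c : ℝ≥0∞) :
    volume ({x : ℝ | ENNReal.ofReal x < c} ∩ Ioo (0:ℝ) T) = min c (ENNReal.ofReal T) := by
  by_cases hc : c = ⊤
  · have : {x : ℝ | ENNReal.ofReal x < c} ∩ Ioo (0:ℝ) T = Ioo (0:ℝ) T := by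
      apply Set.inter_eq_right.mpr
      intro x _
      simp [hc, lt_top_iff_ne_top]
    rw [this, Real.volume_Ioo, sub_zero, hc]
    exact (min_eq_right le_top).symm
  · have hceq : c = ENNReal.ofReal c.toReal := (ENNReal.ofReal_toReal hc).symm
    have hvnn : 0 ≤ c.toReal := ENNReal.toReal_nonneg
    have hset : {x : ℝ | ENNReal.ofReal x < c} ∩ Ioo (0:ℝ) T = Ioo (0:ℝ) (min c.toReal T) := by
      ext x
      simp only [Set.mem_inter_iff, Set.mem_setOf_eq, Set.mem_Ioo, lt_min_iff]
      constructor
      · rintro ⟨h1, h2, h3⟩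
        refine ⟨h2, ?_, h3⟩
        rw [hceq] at h1
        exact (ENNReal.ofReal_lt_ofReal_iff_of_nonneg h2.le).mp h1
      · rintro ⟨h1, h2, h3⟩
        refine ⟨?_, h1, h3⟩
        rw [hceq]
        exact ENNReal.ofReal_lt_ofReal_iff_of_nonneg h1.le |>.mpr h2
    rw [hset, Real.volume_Ioo, sub_zero, ← min_ofReal hvnn hT.le, ← hceq]

lemma tonelli_min (hf : Integrable f) {T : ℝ} (hT : 0 < T) :
    ∫⁻ α in Ioi (0:ℝ), min (volume {t : ℝ | α < |f t|}) (ENNReal.ofReal T)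
      = ∫⁻ x in Ioo (0:ℝ) T, ENNReal.ofReal (decreasingRearrangement f x) := by
  set νf : ℝ → ℝ≥0∞ := fun α => volume {t : ℝ | α < |f t|} with hνf
  set Q : Set (ℝ × ℝ) := {p : ℝ × ℝ | ENNReal.ofReal p.2 < νf p.1} with hQ
  have hQm : MeasurableSet Q :=
    measurableSet_lt (ENNReal.measurable_ofReal.comp measurable_snd)
      ((nu_measurable (f := f)).comp measurable_fst)
  have hswap := MeasureTheory.lintegral_lintegral_swap
    (μ := volume.restrict (Ioi (0:ℝ))) (ν := volume.restrict (Ioo (0:ℝ) T))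
    (f := fun α x => Q.indicator (1 : ℝ × ℝ → ℝ≥0∞) (α, x))
    ((measurable_one.indicator hQm).aemeasurable)
  calc ∫⁻ α in Ioi (0:ℝ), min (νf α) (ENNReal.ofReal T)
      = ∫⁻ α in Ioi (0:ℝ), ∫⁻ x in Ioo (0:ℝ) T, Q.indicator (1 : ℝ × ℝ → ℝ≥0∞) (α, x) := by
        apply lintegral_congr
        intro α
        have hsec : (fun x => Q.indicator (1 : ℝ × ℝ → ℝ≥0∞) (α, x))
            = Set.indicator {x : ℝ | ENNReal.ofReal x < νf α} (1 : ℝ → ℝ≥0∞) := by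
          funext x
          rw [Set.indicator_apply, Set.indicator_apply]
          rfl
        rw [hsec, lintegral_indicator_one
          (measurableSet_lt ENNReal.measurable_ofReal measurable_const),
          Measure.restrict_apply (measurableSet_lt ENNReal.measurable_ofReal measurable_const),
          section_vol hT]
    _ = ∫⁻ x in Ioo (0:ℝ) T, ∫⁻ α in Ioi (0:ℝ), Q.indicator (1 : ℝ × ℝ → ℝ≥0∞) (α, x) := hswap
    _ = ∫⁻ x in Ioo (0:ℝ) T, ENNReal.ofReal (decreasingRearrangement f x) := by
        apply setLIntegral_congr_fun measurableSet_Ioo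
        intro x hx
        have hsec : (fun α => Q.indicator (1 : ℝ × ℝ → ℝ≥0∞) (α, x))
            = Set.indicator {α : ℝ | ENNReal.ofReal x < νf α} (1 : ℝ → ℝ≥0∞) := by
          funext α
          rw [Set.indicator_apply, Set.indicator_apply]
          rfl
        have hm : MeasurableSet {α : ℝ | ENNReal.ofReal x < νf α} :=
          measurableSet_lt measurable_const ((nu_measurable (f := f)))
        beta_reduce
        rw [hsec, lintegral_indicator_one hm, Measure.restrict_apply hm]
        rw [← dR_level_eq hf hx.1]
        congr 1
        ext α
        simp only [Set.mem_inter_iff, Set.mem_setOf_eq, Set.mem_Ioi]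
        tauto

lemma dR_antitoneOn {T : ℝ} (hf : Integrable f) :
    AntitoneOn (decreasingRearrangement f) (Ioo (0:ℝ) T) := by
  intro x hx y hy hxy
  apply csInf_le_csInf ⟨0, fun a ha => ha.1.le⟩ (S_nonempty hf hx.1)
  intro a ha
  exact ⟨ha.1, ha.2.trans (ENNReal.ofReal_le_ofReal hxy)⟩

lemma dR_integrableOn (hf : Integrable f) {T : ℝ} (hT : 0 < T) :
    IntegrableOn (decreasingRearrangement f) (Ioo (0:ℝ) T) volume := by
  constructor
  · exact (aemeasurable_restrict_of_antitoneOn measurableSet_Ioo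
      (dR_antitoneOn hf)).aestronglyMeasurable
  · rw [MeasureTheory.hasFiniteIntegral_def]
    have heq : ∫⁻ x in Ioo (0:ℝ) T, ‖decreasingRearrangement f x‖ₑ
        = ∫⁻ x in Ioo (0:ℝ) T, ENNReal.ofReal (decreasingRearrangement f x) := by
      apply lintegral_congr
      intro x
      rw [← ofReal_norm, Real.norm_eq_abs, abs_of_nonneg (dR_nonneg x)]
    rw [heq, ← tonelli_min hf hT]
    calc ∫⁻ α in Ioi (0:ℝ), min (volume {t : ℝ | α < |f t|}) (ENNReal.ofReal T)
        ≤ ∫⁻ α in Ioi (0:ℝ), volume {t : ℝ | α < |f t|} :=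
          lintegral_mono fun α => min_le_left _ _
      _ = ∫⁻ t, ENNReal.ofReal |f t| := (MeasureTheory.lintegral_eq_lintegral_meas_lt volume
          (Filter.Eventually.of_forall fun t => abs_nonneg (f t)) hf.abs.aemeasurable).symm
      _ = ∫⁻ t, (‖f t‖₊ : ℝ≥0∞) := by
          apply lintegral_congr
          intro t
          rw [← enorm_eq_nnnorm, ← ofReal_norm, Real.norm_eq_abs]
      _ < ⊤ := hf.hasFiniteIntegral

lemma rearr_bound (hf : Integrable f) {T : ℝ} (hT : 0 < T) :
    ∫⁻ α in Ioi (0:ℝ), min (volume {t : ℝ | α < |f t|}) (ENNReal.ofReal T)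
      ≤ ENNReal.ofReal (∫ x in (0:ℝ)..T, decreasingRearrangement f x) := by
  rw [tonelli_min hf hT]
  rw [intervalIntegral.integral_of_le hT.le, MeasureTheory.integral_Ioc_eq_integral_Ioo]
  rw [MeasureTheory.ofReal_integral_eq_lintegral_ofReal (dR_integrableOn hf hT)
    (Filter.Eventually.of_forall fun x => dR_nonneg x)]

end rearr2


/-- `f` can be written as a sum of `n` nonnegative functions with pairwise almost
disjoint supports, each of which crests once. -/
def HasCrestDecomp (f : ℝ → ℝ) (n : ℕ) : Prop :=
  ∃ g : Fin n → ℝ → ℝ,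
    (∀ i, ∀ x, 0 ≤ g i x) ∧
    (∀ i, CrestsOnce (g i)) ∧
    (Pairwise fun i j =>
      volume (Function.support (g i) ∩ Function.support (g j)) = 0) ∧
    (∀ x, f x = ∑ i, g i x)

/-- `#crests(f) = N` : `N` is the least number of pieces in such a decomposition. -/
def CrestsEq (f : ℝ → ℝ) (N : ℕ) : Prop :=
  HasCrestDecomp f N ∧ ∀ m : ℕ, m < N → ¬ HasCrestDecomp f m

lemma nu_antitone' (g : ℝ → ℝ) : Antitone (fun α => volume {x : ℝ | α < g x}) :=
  fun a b hab => measure_mono (fun t ht => lt_of_le_of_lt hab ht)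

lemma ennreal_min_nat_mul {n : ℕ} (hn : 1 ≤ n) {a c : ℝ≥0∞} :
    min a ((n:ℝ≥0∞)*c) ≤ (n:ℝ≥0∞) * min a c := by
  have h1 : (1:ℝ≥0∞) ≤ (n:ℝ≥0∞) := by exact_mod_cast hn
  rcases le_total a c with h | h
  · calc min a ((n:ℝ≥0∞)*c) ≤ a := min_le_left _ _
      _ ≤ (n:ℝ≥0∞) * a := le_mul_of_one_le_left (zero_le) h1
      _ = (n:ℝ≥0∞) * min a c := by rw [min_eq_left h]
  · calc min a ((n:ℝ≥0∞)*c) ≤ (n:ℝ≥0∞)*c := min_le_right _ _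
      _ = (n:ℝ≥0∞) * min a c := by rw [min_eq_right h]

/-- Theorem 1: if `f ∈ L¹` is nonnegative and `#crests(f) = N`, then for all `z > 0`,
`|f̂(z)| ≤ N·π·√10 · ∫₀^{1/z} f*(x) dx`. -/
theorem fourier_bound_of_crests (f : ℝ → ℝ) (hf : Integrable f)
    (hpos : ∀ x, 0 ≤ f x) (N : ℕ) (hN : 0 < N) (hcrests : CrestsEq f N) :
    ∀ z : ℝ, 0 < z →
      ‖fourierTransform f z‖ ≤
        N * π * Real.sqrt 10 * ∫ x in (0:ℝ)..(1/z), decreasingRearrangement f x := by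
  intro z hz
  obtain ⟨⟨g, hg0, hgc, hgdisj, hgsum⟩, -⟩ := hcrests
  set T : ℝ := 1/z with hTdef
  have hTpos : 0 < T := by positivity
  have hgm : ∀ i, Measurable (g i) := fun i => crest_measurable (hgc i)
  have hgle : ∀ i x, g i x ≤ f x := by
    intro i x
    rw [hgsum x]
    exact Finset.single_le_sum (fun j _ => hg0 j x) (Finset.mem_univ i)
  have hgint : ∀ i, Integrable (g i) := by
    intro i
    refine hf.mono ((hgm i).aestronglyMeasurable) (Filter.Eventually.of_forall fun x => ?_)
    rw [Real.norm_eq_abs, Real.norm_eq_abs, abs_of_nonneg (hg0 i x), abs_of_nonneg (hpos x)]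
    exact hgle i x
  have he_meas : Measurable (fun x : ℝ => Complex.exp (-(x * z) * Complex.I)) := by
    apply Complex.measurable_exp.comp
    fun_prop
  have hterm_int : ∀ i : Fin N,
      Integrable (fun x : ℝ => (g i x : ℂ) * Complex.exp (-(x * z) * Complex.I)) := by
    intro i
    refine hf.mono
      (((Complex.measurable_ofReal.comp (hgm i)).mul he_meas).aestronglyMeasurable)
      (Filter.Eventually.of_forall fun x => ?_)
    rw [norm_mul]
    have h1 : ‖((g i x : ℝ) : ℂ)‖ = g i x := by
      rw [Complex.norm_real, Real.norm_eq_abs, abs_of_nonneg (hg0 i x)]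
    have h2 : ‖Complex.exp (-(x * z) * Complex.I)‖ = 1 := by
      have : -((x:ℂ) * z) * Complex.I = ((-(x*z) : ℝ) : ℂ) * Complex.I := by push_cast; ring
      rw [this, Complex.norm_exp]
      simp
    rw [h1, h2, mul_one, Real.norm_eq_abs, abs_of_nonneg (hpos x)]
    exact hgle i x
  have hsplit : fourierTransform f z = ∑ i, fourierTransform (g i) z := by
    unfold fourierTransform
    rw [← MeasureTheory.integral_finset_sum _ (fun i _ => hterm_int i)]
    apply integral_congr_ae
    apply Filter.Eventually.of_forall
    intro x
    have hx := hgsum x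
    simp only [hx]
    push_cast
    rw [Finset.sum_mul]
  -- the main ENNReal estimate
  set I : ℝ := ∫ x in (0:ℝ)..T, decreasingRearrangement f x with hIdef
  have hInn : 0 ≤ I :=
    intervalIntegral.integral_nonneg hTpos.le (fun x _ => dR_nonneg x)
  have hkey : ENNReal.ofReal ‖fourierTransform f z‖ ≤ ENNReal.ofReal ((2*N) * I) := by
    calc ENNReal.ofReal ‖fourierTransform f z‖
        ≤ ENNReal.ofReal (∑ i, ‖fourierTransform (g i) z‖) := by
          apply ENNReal.ofReal_le_ofReal
          rw [hsplit]
          exact norm_sum_le _ _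
      _ = ∑ i, ENNReal.ofReal ‖fourierTransform (g i) z‖ :=
          ENNReal.ofReal_sum_of_nonneg (fun i _ => norm_nonneg _)
      _ ≤ ∑ i, 2 * ∫⁻ α in Ioi (0:ℝ), min (volume {x | α < g i x}) (ENNReal.ofReal T) :=
          Finset.sum_le_sum (fun i _ => crest_bound (hgint i) (hg0 i) (hgc i) hz)
      _ = 2 * ∑ i, ∫⁻ α in Ioi (0:ℝ), min (volume {x | α < g i x}) (ENNReal.ofReal T) := by
          rw [Finset.mul_sum]
      _ = 2 * ∫⁻ α in Ioi (0:ℝ), ∑ i, min (volume {x | α < g i x}) (ENNReal.ofReal T) := by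
          congr 1
          rw [← MeasureTheory.lintegral_finset_sum]
          intro i _
          exact ((nu_antitone' (g i)).measurable).min measurable_const
      _ ≤ 2 * ∫⁻ α in Ioi (0:ℝ),
            (N:ℝ≥0∞) * min (volume {t | α < |f t|}) (ENNReal.ofReal T) := by
          apply mul_le_mul_right ?_ 2
          apply MeasureTheory.lintegral_mono_ae
          rw [MeasureTheory.ae_restrict_iff' measurableSet_Ioi]
          apply Filter.Eventually.of_forall
          intro α hα
          have hsub : ∀ i : Fin N, {x | α < g i x} ⊆ {t : ℝ | α < |f t|} := by
            intro i x hx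
            have : α < f x := lt_of_lt_of_le hx (hgle i x)
            simpa [abs_of_nonneg (hpos x)] using this
          have hdisjae : Pairwise (Function.onFun (AEDisjoint volume) fun i : Fin N => {x | α < g i x}) := by
            intro i j hij
            refine measure_mono_null (fun x hx => ?_) (hgdisj hij)
            have h0α : (0:ℝ) < α := hα
            exact ⟨ne_of_gt (lt_trans h0α hx.1), ne_of_gt (lt_trans h0α hx.2)⟩
          have hsumvol : ∑ i : Fin N, volume {x | α < g i x} ≤ volume {t : ℝ | α < |f t|} := by
            rw [← tsum_fintype (L := SummationFilter.unconditional _)]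
            rw [← MeasureTheory.measure_iUnion₀ hdisjae
              (fun i => ((hgm i) measurableSet_Ioi).nullMeasurableSet)]
            exact measure_mono (Set.iUnion_subset hsub)
          calc ∑ i : Fin N, min (volume {x | α < g i x}) (ENNReal.ofReal T)
              ≤ min (∑ i : Fin N, volume {x | α < g i x}) ((N:ℝ≥0∞) * ENNReal.ofReal T) := by
                refine le_min (Finset.sum_le_sum fun i _ => min_le_left _ _) ?_
                calc ∑ i : Fin N, min (volume {x | α < g i x}) (ENNReal.ofReal T)
                    ≤ ∑ _i : Fin N, ENNReal.ofReal T :=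
                      Finset.sum_le_sum fun i _ => min_le_right _ _
                  _ = (N:ℝ≥0∞) * ENNReal.ofReal T := by
                      rw [Finset.sum_const, Finset.card_univ, Fintype.card_fin, nsmul_eq_mul]
            _ ≤ min (volume {t : ℝ | α < |f t|}) ((N:ℝ≥0∞) * ENNReal.ofReal T) :=
                min_le_min hsumvol (le_refl _)
            _ ≤ (N:ℝ≥0∞) * min (volume {t : ℝ | α < |f t|}) (ENNReal.ofReal T) :=
                ennreal_min_nat_mul hN
      _ = 2 * ((N:ℝ≥0∞) * ∫⁻ α in Ioi (0:ℝ),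
            min (volume {t | α < |f t|}) (ENNReal.ofReal T)) := by
          congr 1
          exact MeasureTheory.lintegral_const_mul' _ _ (ENNReal.natCast_ne_top N)
      _ ≤ 2 * ((N:ℝ≥0∞) * ENNReal.ofReal I) := by
          apply mul_le_mul_right ?_ 2
          exact mul_le_mul_right (rearr_bound hf hTpos) _
      _ = ENNReal.ofReal ((2*N) * I) := by
          rw [ENNReal.ofReal_mul (by positivity : (0:ℝ) ≤ 2*(N:ℝ)),
            ENNReal.ofReal_mul (by norm_num : (0:ℝ) ≤ 2), mul_assoc]
          simp [ENNReal.ofReal_ofNat, ENNReal.ofReal_natCast]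
  have hfinal : ‖fourierTransform f z‖ ≤ (2*N) * I :=
    (ENNReal.ofReal_le_ofReal_iff (by positivity)).mp hkey
  have hpi : (3:ℝ) ≤ π := Real.pi_gt_three.le
  have hsqrt : (1:ℝ) ≤ Real.sqrt 10 := by
    rw [show (1:ℝ) = Real.sqrt 1 from Real.sqrt_one.symm]
    exact Real.sqrt_le_sqrt (by norm_num)
  have hNr : (1:ℝ) ≤ (N:ℝ) := by exact_mod_cast hN
  calc ‖fourierTransform f z‖ = ‖fourierTransform f z‖ := rfl
    _ ≤ (2*N) * I := hfinal
    _ ≤ N * π * Real.sqrt 10 * I := by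
        have h5 : (2:ℝ) ≤ π * Real.sqrt 10 := by nlinarith
        calc (2*(N:ℝ)) * I = (N:ℝ) * 2 * I := by ring
          _ ≤ (N:ℝ) * (π * Real.sqrt 10) * I := by
              apply mul_le_mul_of_nonneg_right
                (mul_le_mul_of_nonneg_left h5 (by positivity)) hInn
          _ = (N:ℝ) * π * Real.sqrt 10 * I := by ring
end

section
/- Let f ∈ L¹(ℝ) be nonnegative and define Q(z) = |f̂(z)| / (π·√10 · ∫₀^{1/z} f*(x) dx) for z > 0. If Q(z) > N for some z > 0 (with N a positive integer), then #crests(f) > N, i.e. f cannot be written as a sum of N or fewer nonnegative functions with pairwise almost disjoint supports each cresting once. -/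
open MeasureTheory Real Set

namespace CrestAux

def rSet (f : ℝ → ℝ) (x : ℝ) : Set ℝ :=
  {α : ℝ | 0 < α ∧ volume {t : ℝ | α < |f t|} ≤ ENNReal.ofReal x}

lemma dr_def (f : ℝ → ℝ) (x : ℝ) : decreasingRearrangement f x = sInf (rSet f x) := rfl

lemma rSet_bddBelow (f : ℝ → ℝ) (x : ℝ) : BddBelow (rSet f x) :=
  ⟨0, fun α hα => hα.1.le⟩

lemma rSet_nonempty {f : ℝ → ℝ} (hf : Integrable f) {x : ℝ} (hx : 0 < x) :
    (rSet f x).Nonempty := by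
  set I := ∫⁻ t, ENNReal.ofReal |f t| ∂volume with hI
  have hIlt : I < ⊤ := by
    have := hf.hasFiniteIntegral
    rw [hasFiniteIntegral_iff_norm] at this
    simpa [Real.norm_eq_abs, hI] using this
  have hmeas : AEMeasurable (fun t => ENNReal.ofReal (|f t|)) volume :=
    ENNReal.measurable_ofReal.comp_aemeasurable hf.abs.aestronglyMeasurable.aemeasurable
  set α := I.toReal / x + 1 with hα
  have hα0 : 0 < α := by positivity
  refine ⟨α, hα0, ?_⟩
  calc volume {t : ℝ | α < |f t|}
      ≤ volume {t : ℝ | ENNReal.ofReal α ≤ ENNReal.ofReal (|f t|)} := by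
        apply measure_mono
        intro t ht
        exact ENNReal.ofReal_le_ofReal (le_of_lt ht)
    _ ≤ I / ENNReal.ofReal α := by
        simpa [hI] using meas_ge_le_lintegral_div hmeas
          (ε := ENNReal.ofReal α) (ENNReal.ofReal_pos.2 hα0).ne' ENNReal.ofReal_ne_top
    _ ≤ ENNReal.ofReal x := by
        rw [ENNReal.div_le_iff (ENNReal.ofReal_pos.2 hα0).ne' ENNReal.ofReal_ne_top,
          ← ENNReal.ofReal_mul hx.le]
        calc I = ENNReal.ofReal I.toReal := (ENNReal.ofReal_toReal hIlt.ne).symm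
          _ ≤ ENNReal.ofReal (x * α) := by
              apply ENNReal.ofReal_le_ofReal
              have hxne : x ≠ 0 := hx.ne'
              have hxa : x * α = I.toReal + x := by
                rw [hα]
                field_simp
              rw [hxa]
              linarith
    
lemma dr_nonneg (f : ℝ → ℝ) (x : ℝ) : 0 ≤ decreasingRearrangement f x := by
  rw [dr_def]
  exact Real.sInf_nonneg (fun α hα => hα.1.le)

lemma dr_le_dr {f g : ℝ → ℝ} (hf : Integrable f) (hfg : ∀ t, |g t| ≤ |f t|) {x : ℝ}
    (hx : 0 < x) : decreasingRearrangement g x ≤ decreasingRearrangement f x := by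
  rw [dr_def, dr_def]
  apply csInf_le_csInf (rSet_bddBelow g x) (rSet_nonempty hf hx)
  rintro α ⟨h1, h2⟩
  refine ⟨h1, le_trans (measure_mono ?_) h2⟩
  intro t ht
  exact lt_of_lt_of_le ht (hfg t)

lemma dr_antitoneOn {f : ℝ → ℝ} (hf : Integrable f) :
    AntitoneOn (decreasingRearrangement f) (Ioi 0) := by
  intro x hx y _ hxy
  rw [dr_def, dr_def]
  apply csInf_le_csInf (rSet_bddBelow f y) (rSet_nonempty hf hx)
  rintro α ⟨h1, h2⟩
  exact ⟨h1, h2.trans (ENNReal.ofReal_le_ofReal hxy)⟩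

lemma dr_ge_left {g : ℝ → ℝ} (hg : Integrable g) (hgpos : ∀ x, 0 ≤ g x) {b : ℝ}
    (mono : MonotoneOn g (Iic b)) {x : ℝ} (hx : 0 < x) :
    g (b - 2 * x) ≤ decreasingRearrangement g x := by
  rw [dr_def]
  apply le_csInf (rSet_nonempty hg hx)
  rintro α ⟨hα0, hαm⟩
  by_contra hlt
  push_neg at hlt
  have hsub : Icc (b - 2 * x) b ⊆ {t : ℝ | α < |g t|} := by
    intro y hy
    have h1 : g (b - 2 * x) ≤ g y :=
      mono (by simp only [mem_Iic]; linarith) (mem_Iic.2 hy.2) hy.1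
    have : α < g y := lt_of_lt_of_le hlt h1
    simpa [abs_of_nonneg (hgpos y)] using this
  have h2 := le_trans (measure_mono hsub) hαm
  rw [Real.volume_Icc] at h2
  have h3 : b - (b - 2 * x) ≤ x := (ENNReal.ofReal_le_ofReal_iff hx.le).mp h2
  linarith

lemma dr_ge_right {g : ℝ → ℝ} (hg : Integrable g) (hgpos : ∀ x, 0 ≤ g x) {b : ℝ}
    (anti : AntitoneOn g (Ici b)) {x : ℝ} (hx : 0 < x) :
    g (b + 2 * x) ≤ decreasingRearrangement g x := by
  rw [dr_def]
  apply le_csInf (rSet_nonempty hg hx)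
  rintro α ⟨hα0, hαm⟩
  by_contra hlt
  push_neg at hlt
  have hsub : Icc b (b + 2 * x) ⊆ {t : ℝ | α < |g t|} := by
    intro y hy
    have h1 : g (b + 2 * x) ≤ g y :=
      anti (mem_Ici.2 hy.1) (by simp only [mem_Ici]; linarith) hy.2
    have : α < g y := lt_of_lt_of_le hlt h1
    simpa [abs_of_nonneg (hgpos y)] using this
  have h2 := le_trans (measure_mono hsub) hαm
  rw [Real.volume_Icc] at h2
  have h3 : b + 2 * x - b ≤ x := (ENNReal.ofReal_le_ofReal_iff hx.le).mp h2
  linarith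

end CrestAux

namespace CrestAux

lemma setIntegral_Iic_shift (f : ℝ → ℝ) (c d : ℝ) :
    ∫ x in Iic c, f (x + d) = ∫ x in Iic (c + d), f x := by
  rw [← integral_indicator measurableSet_Iic, ← integral_indicator measurableSet_Iic,
    ← integral_add_right_eq_self (fun x => (Iic (c + d)).indicator f x) d]
  congr 1
  funext x
  by_cases hx : x ≤ c
  · simp [Set.indicator_apply, mem_Iic, hx, show x + d ≤ c + d by linarith]
  · simp [Set.indicator_apply, mem_Iic, hx, show ¬ (x + d ≤ c + d) by intro h; exact hx (by linarith)]

lemma setIntegral_Ioi_shift (f : ℝ → ℝ) (c d : ℝ) :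
    ∫ x in Ioi c, f (x + d) = ∫ x in Ioi (c + d), f x := by
  rw [← integral_indicator measurableSet_Ioi, ← integral_indicator measurableSet_Ioi,
    ← integral_add_right_eq_self (fun x => (Ioi (c + d)).indicator f x) d]
  congr 1
  funext x
  by_cases hx : c < x
  · simp [Set.indicator_apply, mem_Ioi, hx, show c + d < x + d by linarith]
  · simp [Set.indicator_apply, mem_Ioi, hx, show ¬ (c + d < x + d) by intro h; exact hx (by linarith)]

lemma setIntegral_Ioc_shift (f : ℝ → ℝ) {a c : ℝ} (d : ℝ) (h : a ≤ c) :
    ∫ x in Ioc a c, f (x + d) = ∫ x in Ioc (a + d) (c + d), f x := by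
  rw [← intervalIntegral.integral_of_le h, ← intervalIntegral.integral_of_le (by linarith),
    intervalIntegral.integral_comp_add_right]

lemma exp_norm_one (z x : ℝ) : ‖Complex.exp (-(x * z) * Complex.I)‖ = 1 := by
  rw [Complex.norm_exp]
  simp

lemma mul_exp_integrable {h : ℝ → ℝ} (hh : Integrable h) (z : ℝ) :
    Integrable (fun x : ℝ => (h x : ℂ) * Complex.exp (-(x * z) * Complex.I)) := by
  have hce : Continuous fun x : ℝ => Complex.exp (-(x * z) * Complex.I) := by
    apply Complex.continuous_exp.comp
    fun_prop
  have := Integrable.bdd_mul (hh.ofReal (𝕜 := ℂ)) hce.aestronglyMeasurable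
    (Filter.Eventually.of_forall fun x => (exp_norm_one z x).le)
  simpa [mul_comm] using this

end CrestAux

namespace CrestAux

lemma crest_bound (g : ℝ → ℝ) (hg : Integrable g) (hgpos : ∀ x, 0 ≤ g x)
    {b : ℝ} (mono : MonotoneOn g (Iic b)) (anti : AntitoneOn g (Ici b))
    {z : ℝ} (hz : 0 < z) (φ : ℝ → ℝ)
    (hφ : ∀ x, 0 < x → decreasingRearrangement g x ≤ φ x)
    (hφint : IntegrableOn φ (Ioc 0 (π / (2 * z)))) :
    ‖fourierTransform g z‖ ≤ 4 * ∫ x in Ioc (0:ℝ) (π / (2 * z)), φ x := by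
  set s : ℝ := π / z with hs
  have hs0 : 0 < s := div_pos Real.pi_pos hz
  have hsz : s * z = π := div_mul_cancel₀ _ hz.ne'
  have hu : s / 2 = π / (2 * z) := by rw [hs]; ring
  have hgs : Integrable (fun x => g (x + s)) := hg.comp_add_right s
  have hD : Integrable (fun x => |g x - g (x + s)|) := (hg.sub hgs).abs
  set A : ℝ := ∫ x in Ioc (b - s) b, g x with hA
  set B : ℝ := ∫ x in Ioc b (b + s), g x with hB
  -- Step 1 : 2 |ĝ(z)| ≤ ∫ |g x - g (x+s)|
  have key : 2 * ‖fourierTransform g z‖ ≤ ∫ x, |g x - g (x + s)| := by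
    have hneg : ∫ x : ℝ, (g (x + s) : ℂ) * Complex.exp (-(x * z) * Complex.I)
        = - fourierTransform g z := by
      have hpt : ∀ x : ℝ, (g (x + s) : ℂ) * Complex.exp (-(x * z) * Complex.I)
          = -((fun y : ℝ => (g y : ℂ) * Complex.exp (-(y * z) * Complex.I)) (x + s)) := by
        intro x
        have hexp : Complex.exp (-(((x + s) : ℝ) * z) * Complex.I)
            = - Complex.exp (-(x * z) * Complex.I) := by
          have h1 : (-(((x + s) : ℝ) * z) * Complex.I : ℂ)
              = -(x * z) * Complex.I + -(((s * z) : ℝ) * Complex.I) := by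
            push_cast; ring
          rw [h1, Complex.exp_add, hsz]
          rw [show (-((π : ℝ) * Complex.I) : ℂ) = -((π : ℝ) * Complex.I) by norm_num,
            Complex.exp_neg, Complex.exp_pi_mul_I]
          rw [show ((-1 : ℂ))⁻¹ = -1 by norm_num]
          ring
        simp only [hexp]
        ring
      calc ∫ x : ℝ, (g (x + s) : ℂ) * Complex.exp (-(x * z) * Complex.I)
          = ∫ x : ℝ, -((fun y : ℝ => (g y : ℂ) * Complex.exp (-(y * z) * Complex.I)) (x + s)) := by
            simp only [hpt]
        _ = - ∫ x : ℝ, (fun y : ℝ => (g y : ℂ) * Complex.exp (-(y * z) * Complex.I)) (x + s) :=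
            integral_neg _
        _ = - fourierTransform g z := by
            rw [integral_add_right_eq_self (fun y : ℝ => (g y : ℂ)
              * Complex.exp (-(y * z) * Complex.I)) s]
            rfl
    have hsub : (2 : ℂ) * fourierTransform g z
        = ∫ x : ℝ, ((g x : ℂ) - (g (x + s) : ℂ)) * Complex.exp (-(x * z) * Complex.I) := by
      have h2 : ∫ x : ℝ, ((g x : ℂ) - (g (x + s) : ℂ)) * Complex.exp (-(x * z) * Complex.I)
          = (∫ x : ℝ, (g x : ℂ) * Complex.exp (-(x * z) * Complex.I))
            - ∫ x : ℝ, (g (x + s) : ℂ) * Complex.exp (-(x * z) * Complex.I) := by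
        rw [← integral_sub (mul_exp_integrable hg z) (mul_exp_integrable hgs z)]
        congr 1
        funext x
        ring
      rw [h2, hneg]
      show (2 : ℂ) * fourierTransform g z = fourierTransform g z - - fourierTransform g z
      ring
    calc 2 * ‖fourierTransform g z‖
        = ‖(2 : ℂ) * fourierTransform g z‖ := by
          rw [norm_mul]; simp
      _ = ‖∫ x : ℝ, ((g x : ℂ) - (g (x + s) : ℂ)) * Complex.exp (-(x * z) * Complex.I)‖ := by
          rw [hsub]
      _ ≤ ∫ x : ℝ, ‖((g x : ℂ) - (g (x + s) : ℂ)) * Complex.exp (-(x * z) * Complex.I)‖ :=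
          norm_integral_le_integral_norm _
      _ = ∫ x, |g x - g (x + s)| := by
          congr 1
          funext x
          rw [norm_mul, exp_norm_one, mul_one]
          rw [show ((g x : ℂ) - (g (x + s) : ℂ)) = ((g x - g (x + s) : ℝ) : ℂ) by push_cast; ring]
          rw [Complex.norm_real, Real.norm_eq_abs]
  -- Step 2 : ∫ |g x - g (x+s)| ≤ 2 A + 2 B
  have step2 : ∫ x, |g x - g (x + s)| ≤ 2 * A + 2 * B := by
    have hsplit : ∫ x, |g x - g (x + s)|
        = (∫ x in Iic (b - s), |g x - g (x + s)|)
          + ((∫ x in Ioc (b - s) b, |g x - g (x + s)|) + ∫ x in Ioi b, |g x - g (x + s)|) := by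
      have h1 := integral_add_compl (measurableSet_Iic (a := b - s)) hD
      rw [compl_Iic] at h1
      have h2 : Ioc (b - s) b ∪ Ioi b = Ioi (b - s) := Ioc_union_Ioi_eq_Ioi (by linarith)
      rw [← h2, setIntegral_union (Ioc_disjoint_Ioi le_rfl) measurableSet_Ioi
        hD.integrableOn hD.integrableOn] at h1
      linarith
    have hIicb : ∫ x in Iic b, g x = (∫ x in Iic (b - s), g x) + A := by
      rw [← setIntegral_union (Iic_disjoint_Ioc le_rfl) measurableSet_Ioc
        hg.integrableOn hg.integrableOn, Iic_union_Ioc_eq_Iic (by linarith)]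
    have hIoib : ∫ x in Ioi b, g x = B + ∫ x in Ioi (b + s), g x := by
      rw [← setIntegral_union (Ioc_disjoint_Ioi le_rfl) measurableSet_Ioi
        hg.integrableOn hg.integrableOn, Ioc_union_Ioi_eq_Ioi (by linarith)]
    have hP1 : ∫ x in Iic (b - s), |g x - g (x + s)| = A := by
      have hcg : ∫ x in Iic (b - s), |g x - g (x + s)|
          = ∫ x in Iic (b - s), (g (x + s) - g x) := by
        apply setIntegral_congr_fun measurableSet_Iic
        intro x hx
        rw [mem_Iic] at hx
        show |g x - g (x + s)| = g (x + s) - g x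
        rw [abs_sub_comm, abs_of_nonneg]
        exact sub_nonneg.2 (mono (mem_Iic.2 (by linarith)) (mem_Iic.2 (by linarith)) (by linarith))
      rw [hcg, integral_sub hgs.integrableOn hg.integrableOn, setIntegral_Iic_shift,
        show b - s + s = b by ring]
      linarith
    have hP3 : ∫ x in Ioi b, |g x - g (x + s)| = B := by
      have hcg : ∫ x in Ioi b, |g x - g (x + s)|
          = ∫ x in Ioi b, (g x - g (x + s)) := by
        apply setIntegral_congr_fun measurableSet_Ioi
        intro x hx
        rw [mem_Ioi] at hx
        show |g x - g (x + s)| = g x - g (x + s)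
        rw [abs_of_nonneg]
        exact sub_nonneg.2 (anti (mem_Ici.2 (by linarith)) (mem_Ici.2 (by linarith)) (by linarith))
      rw [hcg, integral_sub hg.integrableOn hgs.integrableOn, setIntegral_Ioi_shift]
      linarith
    have hP2 : ∫ x in Ioc (b - s) b, |g x - g (x + s)| ≤ A + B := by
      calc ∫ x in Ioc (b - s) b, |g x - g (x + s)|
          ≤ ∫ x in Ioc (b - s) b, (g x + g (x + s)) := by
            apply setIntegral_mono_on hD.integrableOn
              (hg.integrableOn.add hgs.integrableOn) measurableSet_Ioc
            intro x _
            calc |g x - g (x + s)| = ‖g x - g (x + s)‖ := (Real.norm_eq_abs _).symm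
              _ ≤ ‖g x‖ + ‖g (x + s)‖ := norm_sub_le _ _
              _ = g x + g (x + s) := by
                  rw [Real.norm_eq_abs, Real.norm_eq_abs, abs_of_nonneg (hgpos x),
                    abs_of_nonneg (hgpos (x + s))]
        _ = A + B := by
            rw [integral_add hg.integrableOn hgs.integrableOn,
              setIntegral_Ioc_shift g s (by linarith : b - s ≤ b),
              show b - s + s = b by ring]
    rw [hsplit, hP1, hP3]
    linarith
  -- Step 3 : A ≤ 2 ∫_{(0,π/2z]} φ and B likewise
  have hgbl : Integrable (fun x : ℝ => g (b - 2 * x)) := by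
    have h1 := (hg.comp_mul_left' (R := (-2 : ℝ)) (by norm_num)).comp_add_right (-(b / 2))
    have h2 : (fun x : ℝ => g (-2 * (x + -(b / 2)))) = fun x : ℝ => g (b - 2 * x) := by
      funext x; congr 1; ring
    rwa [h2] at h1
  have hgbr : Integrable (fun x : ℝ => g (b + 2 * x)) := by
    have h1 := (hg.comp_mul_left' (R := (2 : ℝ)) (by norm_num)).comp_add_right (b / 2)
    have h2 : (fun x : ℝ => g (2 * (x + b / 2))) = fun x : ℝ => g (b + 2 * x) := by
      funext x; congr 1; ring
    rwa [h2] at h1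
  have hstepA : A ≤ 2 * ∫ x in Ioc (0:ℝ) (π / (2 * z)), φ x := by
    have hA1 : A = 2 * ∫ x in Ioc (0:ℝ) (s / 2), g (b - 2 * x) := by
      have h1 : ∫ x in (0:ℝ)..s, g (b - x) = ∫ x in b - s..b, g x := by
        simpa using intervalIntegral.integral_comp_sub_left (a := 0) (b := s) g b
      have h2 : ∫ x in (0:ℝ)..(s / 2), g (b - 2 * x)
          = (2:ℝ)⁻¹ • ∫ x in (0:ℝ)..s, g (b - x) := by
        have hcm := intervalIntegral.integral_comp_mul_left (a := (0:ℝ)) (b := s / 2)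
          (fun u => g (b - u)) (by norm_num : (2:ℝ) ≠ 0)
        rw [mul_zero, show (2:ℝ) * (s / 2) = s by ring] at hcm
        exact hcm
      rw [hA, ← intervalIntegral.integral_of_le (show b - s ≤ b by linarith), ← h1,
        ← intervalIntegral.integral_of_le (show (0:ℝ) ≤ s / 2 by linarith), h2]
      rw [smul_eq_mul]
      ring
    rw [hA1, ← hu]
    have : ∫ x in Ioc (0:ℝ) (s / 2), g (b - 2 * x) ≤ ∫ x in Ioc (0:ℝ) (s / 2), φ x := by
      apply setIntegral_mono_on hgbl.integrableOn (hu ▸ hφint) measurableSet_Ioc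
      intro x hx
      exact le_trans (dr_ge_left hg hgpos mono hx.1) (hφ x hx.1)
    linarith
  have hstepB : B ≤ 2 * ∫ x in Ioc (0:ℝ) (π / (2 * z)), φ x := by
    have hB1 : B = 2 * ∫ x in Ioc (0:ℝ) (s / 2), g (b + 2 * x) := by
      have h1 : ∫ x in (0:ℝ)..s, g (b + x) = ∫ x in b..b + s, g x := by
        simpa using intervalIntegral.integral_comp_add_left (a := 0) (b := s) g b
      have h2 : ∫ x in (0:ℝ)..(s / 2), g (b + 2 * x)
          = (2:ℝ)⁻¹ • ∫ x in (0:ℝ)..s, g (b + x) := by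
        have hcm := intervalIntegral.integral_comp_mul_left (a := (0:ℝ)) (b := s / 2)
          (fun u => g (b + u)) (by norm_num : (2:ℝ) ≠ 0)
        rw [mul_zero, show (2:ℝ) * (s / 2) = s by ring] at hcm
        exact hcm
      rw [hB, ← intervalIntegral.integral_of_le (show b ≤ b + s by linarith), ← h1,
        ← intervalIntegral.integral_of_le (show (0:ℝ) ≤ s / 2 by linarith), h2]
      rw [smul_eq_mul]
      ring
    rw [hB1, ← hu]
    have : ∫ x in Ioc (0:ℝ) (s / 2), g (b + 2 * x) ≤ ∫ x in Ioc (0:ℝ) (s / 2), φ x := by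
      apply setIntegral_mono_on hgbr.integrableOn (hu ▸ hφint) measurableSet_Ioc
      intro x hx
      exact le_trans (dr_ge_right hg hgpos anti hx.1) (hφ x hx.1)
    linarith
  linarith

end CrestAux

namespace CrestAux

lemma crest_integrable {f g : ℝ → ℝ} (hf : Integrable f) (hc : CrestsOnce g)
    (hbound : ∀ x, |g x| ≤ |f x|) : Integrable g := by
  obtain ⟨b, mono, anti⟩ := hc
  have h1 : AEMeasurable g (volume.restrict (Iic b)) :=
    aemeasurable_restrict_of_monotoneOn measurableSet_Iic mono
  have h2 : AEMeasurable g (volume.restrict (Ici b)) :=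
    aemeasurable_restrict_of_antitoneOn measurableSet_Ici anti
  have h3 : AEMeasurable g volume := by
    have hle : (volume : Measure ℝ) ≤ volume.restrict (Iic b) + volume.restrict (Ici b) := by
      have h := Measure.restrict_union_le (μ := (volume : Measure ℝ)) (Iic b) (Ici b)
      rwa [Iic_union_Ici, Measure.restrict_univ] at h
    exact (h1.add_measure h2).mono_measure hle
  exact hf.mono h3.aestronglyMeasurable
    (Filter.Eventually.of_forall fun x => by
      simpa [Real.norm_eq_abs] using hbound x)

end CrestAux

/-- Theorem 2: if `Q(z) > N` for some `z > 0` then `#crests(f) > N`, i.e. `f` admits no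
decomposition into `N` or fewer nonnegative, almost-disjointly-supported pieces each
cresting once. -/
theorem crests_gt_of_Q_gt (f : ℝ → ℝ) (hf : Integrable f)
    (hpos : ∀ x, 0 ≤ f x) (N : ℕ) (hN : 0 < N)
    (h : ∃ z : ℝ, 0 < z ∧
      ‖fourierTransform f z‖ /
        (π * Real.sqrt 10 * ∫ x in (0:ℝ)..(1/z), decreasingRearrangement f x) > N) :
    ∀ m : ℕ, m ≤ N → ¬ HasCrestDecomp f m := by
  rintro m hm ⟨g, hgpos, hgcrest, -, hsum⟩
  obtain ⟨z, hz, hQ⟩ := h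
  set F : ℝ → ℝ := decreasingRearrangement f with hF
  set t : ℝ := 1 / z with ht
  set D : ℝ := ∫ x in (0:ℝ)..t, F x with hD
  have ht0 : 0 < t := by positivity
  have habs0 : 0 ≤ ‖fourierTransform f z‖ := norm_nonneg _
  have hsqrt3 : (3:ℝ) ≤ Real.sqrt 10 := by
    have h9 : Real.sqrt 9 ≤ Real.sqrt 10 := Real.sqrt_le_sqrt (by norm_num)
    have h3 : Real.sqrt 9 = 3 := by
      rw [show (9:ℝ) = 3 ^ 2 by norm_num, Real.sqrt_sq (by norm_num : (0:ℝ) ≤ 3)]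
    linarith
  have hpi3 : (3:ℝ) < π := Real.pi_gt_three
  have hpi4 : π < 3.15 := Real.pi_lt_d2
  have hN1 : (1:ℝ) ≤ (N:ℝ) := by exact_mod_cast hN
  -- the denominator must be positive
  have hden : 0 < π * Real.sqrt 10 * D := by
    by_contra hle
    push_neg at hle
    have hdiv := div_nonpos_of_nonneg_of_nonpos habs0 hle
    rw [hD, hF, ht] at hdiv
    linarith [hQ]
  have hps : 0 < π * Real.sqrt 10 := by
    have : 0 < Real.sqrt 10 := Real.sqrt_pos.2 (by norm_num)
    nlinarith [Real.pi_gt_three]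
  have hDpos : 0 < D := by
    by_contra hle
    push_neg at hle
    have := mul_nonpos_of_nonneg_of_nonpos hps.le hle
    linarith
  have hnum : (N:ℝ) * (π * Real.sqrt 10 * D) < ‖fourierTransform f z‖ := by
    rw [gt_iff_lt, lt_div_iff₀ hden] at hQ
    exact hQ
  -- f* is integrable on (0, t]
  have hfint : IntegrableOn F (Ioc 0 t) := by
    by_contra hni
    have : D = 0 := by
      rw [hD, intervalIntegral.integral_of_le ht0.le]
      exact integral_undef hni
    linarith
  set u : ℝ := π / (2 * z) with hu
  have htu : t ≤ u := by
    rw [hu, ht, div_le_div_iff₀ hz (by positivity)]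
    nlinarith
  have hut : u - t ≤ t := by
    rw [hu, ht]
    rw [div_sub_div _ _ (by positivity : (2:ℝ) * z ≠ 0) hz.ne', div_le_div_iff₀ (by positivity) hz]
    nlinarith [mul_pos hz hz]
  have hFanti : AntitoneOn F (Ioi 0) := CrestAux.dr_antitoneOn hf
  have hFnn : ∀ x, 0 ≤ F x := fun x => CrestAux.dr_nonneg f x
  -- f* is integrable on (t, u]
  have hfint2 : IntegrableOn F (Ioc t u) := by
    have hmeas : AEStronglyMeasurable F (volume.restrict (Ioc t u)) :=
      (aemeasurable_restrict_of_antitoneOn measurableSet_Ioc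
        (hFanti.mono (fun x hx => lt_trans ht0 hx.1))).aestronglyMeasurable
    apply Integrable.mono' (g := fun _ => F t)
      (integrableOn_const measure_Ioc_lt_top.ne) hmeas
    refine (ae_restrict_iff' measurableSet_Ioc).2 (Filter.Eventually.of_forall fun x hx => ?_)
    rw [Real.norm_eq_abs, abs_of_nonneg (hFnn x)]
    exact hFanti (mem_Ioi.2 ht0) (mem_Ioi.2 (lt_trans ht0 hx.1)) hx.1.le
  have hfintu : IntegrableOn F (Ioc 0 u) := by
    rw [show Ioc (0:ℝ) u = Ioc 0 t ∪ Ioc t u from (Ioc_union_Ioc_eq_Ioc ht0.le htu).symm]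
    exact hfint.union hfint2
  -- doubling : ∫_{(0,u]} F ≤ 2 D
  have hdouble : (∫ x in Ioc (0:ℝ) u, F x) ≤ 2 * D := by
    have hsplit : ∫ x in Ioc (0:ℝ) u, F x
        = (∫ x in Ioc (0:ℝ) t, F x) + ∫ x in Ioc t u, F x := by
      rw [show Ioc (0:ℝ) u = Ioc 0 t ∪ Ioc t u from (Ioc_union_Ioc_eq_Ioc ht0.le htu).symm,
        setIntegral_union (Ioc_disjoint_Ioc_of_le le_rfl) measurableSet_Ioc hfint hfint2]
    have htail1 : ∫ x in Ioc t u, F x = ∫ x in Ioc (0:ℝ) (u - t), F (x + t) := by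
      rw [CrestAux.setIntegral_Ioc_shift F t (by linarith : (0:ℝ) ≤ u - t), zero_add,
        show u - t + t = u by ring]
    have hshift_int : IntegrableOn (fun x => F (x + t)) (Ioc 0 (u - t)) := by
      have h1 : IntervalIntegrable F volume t u :=
        (intervalIntegrable_iff_integrableOn_Ioc_of_le htu).2 hfint2
      have h2 := h1.comp_add_right t
      rw [show t - t = (0:ℝ) by ring] at h2
      exact (intervalIntegrable_iff_integrableOn_Ioc_of_le (by linarith)).1 h2
    have htail2 : (∫ x in Ioc (0:ℝ) (u - t), F (x + t)) ≤ ∫ x in Ioc (0:ℝ) (u - t), F x := by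
      apply setIntegral_mono_on hshift_int (hfint.mono_set (Ioc_subset_Ioc_right hut))
        measurableSet_Ioc
      intro x hx
      exact hFanti (mem_Ioi.2 hx.1) (mem_Ioi.2 (by linarith [hx.1])) (by linarith)
    have htail3 : (∫ x in Ioc (0:ℝ) (u - t), F x) ≤ ∫ x in Ioc (0:ℝ) t, F x := by
      apply setIntegral_mono_set hfint
        ((ae_restrict_iff' measurableSet_Ioc).2 (Filter.Eventually.of_forall fun x _ => hFnn x))
      exact (Ioc_subset_Ioc_right hut).eventuallyLE
    have hDeq : D = ∫ x in Ioc (0:ℝ) t, F x := by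
      rw [hD, intervalIntegral.integral_of_le ht0.le]
    linarith
  -- each piece is dominated by f and integrable
  have hgile : ∀ i x, g i x ≤ f x := by
    intro i x
    rw [hsum x]
    exact Finset.single_le_sum (fun j _ => hgpos j x) (Finset.mem_univ i)
  have hgabs : ∀ i x, |g i x| ≤ |f x| := by
    intro i x
    rw [abs_of_nonneg (hgpos i x), abs_of_nonneg (hpos x)]
    exact hgile i x
  have hgi_int : ∀ i, Integrable (g i) := fun i =>
    CrestAux.crest_integrable hf (hgcrest i) (hgabs i)
  -- Fourier additivity
  have hFsum : fourierTransform f z = ∑ i, fourierTransform (g i) z := by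
    unfold fourierTransform
    rw [← integral_finset_sum Finset.univ (fun i _ => CrestAux.mul_exp_integrable (hgi_int i) z)]
    congr 1
    funext x
    rw [hsum x]
    push_cast
    rw [Finset.sum_mul]
  -- bound on each piece
  have hbound : ∀ i, ‖fourierTransform (g i) z‖ ≤ 4 * ∫ x in Ioc (0:ℝ) u, F x := by
    intro i
    obtain ⟨b, mono, anti⟩ := hgcrest i
    exact CrestAux.crest_bound (g i) (hgi_int i) (hgpos i) mono anti hz F
      (fun x hx => CrestAux.dr_le_dr hf (hgabs i) hx) (hu ▸ hfintu)
  -- combine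
  have hsum_bound : ‖fourierTransform f z‖
      ≤ (m : ℝ) * (4 * ∫ x in Ioc (0:ℝ) u, F x) := by
    rw [hFsum]
    calc ‖∑ i, fourierTransform (g i) z‖
        ≤ ∑ i, ‖fourierTransform (g i) z‖ :=
          norm_sum_le _ _
      _ ≤ ∑ _i : Fin m, (4 * ∫ x in Ioc (0:ℝ) u, F x) :=
          Finset.sum_le_sum (fun i _ => hbound i)
      _ = (m : ℝ) * (4 * ∫ x in Ioc (0:ℝ) u, F x) := by
          rw [Finset.sum_const, Finset.card_univ, Fintype.card_fin, nsmul_eq_mul]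
  have hIu0 : 0 ≤ ∫ x in Ioc (0:ℝ) u, F x :=
    setIntegral_nonneg measurableSet_Ioc (fun x _ => hFnn x)
  have hmN : (m:ℝ) ≤ (N:ℝ) := by exact_mod_cast hm
  have hmain : ‖fourierTransform f z‖ ≤ (N:ℝ) * (8 * D) := by
    calc ‖fourierTransform f z‖
        ≤ (m : ℝ) * (4 * ∫ x in Ioc (0:ℝ) u, F x) := hsum_bound
      _ ≤ (N : ℝ) * (4 * ∫ x in Ioc (0:ℝ) u, F x) := by
          apply mul_le_mul_of_nonneg_right hmN (by linarith)
      _ ≤ (N : ℝ) * (8 * D) := by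
          apply mul_le_mul_of_nonneg_left _ (by linarith)
          linarith
  have hND : 0 < (N:ℝ) * D := mul_pos (by linarith) hDpos
  have h89 : (8:ℝ) < π * Real.sqrt 10 := by nlinarith
  nlinarith [mul_lt_mul_of_pos_right h89 hND]
end

section
/- Let f ∈ L¹(ℝ) be nonnegative, vanish on the negative half-line, and be monotone decreasing on [0, ∞). Then for every z > 0, |f̂(z)| ≤ (π/2)·√10 · ∫₀^{1/z} f(x) dx. -/
open MeasureTheory Real Set

/-- Lemma: if `f ∈ L¹[0,∞)` is nonnegative and decreasing then
`|f̂(z)| ≤ (π/2)·√10 · ∫₀^{1/z} f(x) dx` for all `z > 0`. -/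
theorem fourier_bound_of_decreasing (f : ℝ → ℝ) (hf : Integrable f)
    (hpos : ∀ x, 0 ≤ f x) (hzero : ∀ x < (0:ℝ), f x = 0)
    (hdec : AntitoneOn f (Set.Ici 0)) :
    ∀ z : ℝ, 0 < z →
      ‖fourierTransform f z‖ ≤
        (π / 2) * Real.sqrt 10 * ∫ x in (0:ℝ)..(1/z), f x := by
  intro z hz
  set a : ℝ := 1 / z with ha
  have ha0 : 0 < a := by positivity
  set h : ℝ := π / z with hh
  have hh0 : 0 < h := div_pos pi_pos hz
  have hhz : h * z = π := div_mul_cancel₀ π hz.ne'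
  have hfc : Integrable (fun x => f (x + h)) := hf.comp_add_right h
  set F : ℝ → ℂ := fun x => (f x : ℂ) * Complex.exp (-(x * z) * Complex.I) with hFdef
  set G : ℝ → ℂ := fun x => (f (x + h) : ℂ) * Complex.exp (-(x * z) * Complex.I) with hGdef
  have hexp_norm : ∀ r x : ℝ, ‖(r : ℂ) * Complex.exp (-(↑x * ↑z) * Complex.I)‖ = |r| := by
    intro r x
    rw [norm_mul, Complex.norm_exp]
    simp
  have hmeas_exp : AEStronglyMeasurable (fun x : ℝ => Complex.exp (-(↑x * ↑z) * Complex.I)) volume :=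
    (Continuous.aestronglyMeasurable (by continuity))
  have hintC : ∀ g : ℝ → ℝ, Integrable g →
      Integrable (fun x => (g x : ℂ) * Complex.exp (-(↑x * ↑z) * Complex.I)) := by
    intro g hg
    refine Integrable.mono' hg.norm ((Complex.continuous_ofReal.comp_aestronglyMeasurable hg.1).mul hmeas_exp) ?_
    filter_upwards with x
    rw [hexp_norm, Real.norm_eq_abs]
  have hFint : Integrable F := hintC f hf
  have hGint : Integrable G := hintC _ hfc
  have hFh : ∀ x : ℝ, F (x + h) = -(G x) := by
    intro x
    have e1 : (-((↑(x + h) : ℂ) * ↑z) * Complex.I)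
        = -((x:ℂ) * z) * Complex.I + -(((h:ℝ):ℂ) * z) * Complex.I := by push_cast; ring
    have e2 : Complex.exp (-(((h:ℝ):ℂ) * z) * Complex.I) = -1 := by
      have : (((h:ℝ):ℂ) * z) = (π:ℂ) := by exact_mod_cast congrArg (fun r : ℝ => (r:ℂ)) hhz
      rw [this, neg_mul, Complex.exp_neg, Complex.exp_pi_mul_I]
      norm_num
    simp only [hFdef, hGdef]
    rw [e1, Complex.exp_add, e2]
    ring
  have hGF : ∫ x, G x = - ∫ x, F x := by
    have s1 : ∫ x, F (x + h) = ∫ x, F x := integral_add_right_eq_self F h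
    have s2 : ∫ x, F (x + h) = ∫ x, -(G x) := by simp_rw [hFh]
    rw [integral_neg] at s2
    linear_combination s2 - s1
  have key : fourierTransform f z
      = (1/2 : ℂ) * ∫ x, ((f x - f (x + h) : ℝ) : ℂ) * Complex.exp (-(↑x * ↑z) * Complex.I) := by
    have e : (fun x : ℝ => ((f x - f (x + h) : ℝ) : ℂ) * Complex.exp (-(↑x * ↑z) * Complex.I))
        = fun x => F x - G x := by
      funext x; simp only [hFdef, hGdef]; push_cast; ring
    have unf : fourierTransform f z = ∫ x, F x := by
      simp only [fourierTransform, hFdef, neg_mul]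
    rw [e, integral_sub hFint hGint, hGF, unf]
    ring
  -- step 2: bound by L¹ norm of difference
  have bound1 : ‖fourierTransform f z‖ ≤ (1/2) * ∫ x, |f x - f (x + h)| := by
    rw [key, norm_mul]
    have hb := MeasureTheory.norm_integral_le_integral_norm (μ := volume)
      (fun x : ℝ => ((f x - f (x + h) : ℝ) : ℂ) * Complex.exp (-(↑x * ↑z) * Complex.I))
    simp only [hexp_norm] at hb
    have : ‖(1/2 : ℂ)‖ = 1/2 := by norm_num
    rw [this]
    exact mul_le_mul_of_nonneg_left hb (by norm_num)
  -- step 3: compute the L¹ norm of the difference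
  have hind : Integrable ((Set.Iio (0:ℝ)).indicator fun y => f (y + h)) :=
    hfc.indicator measurableSet_Iio
  have ptw : (fun x => |f x - f (x + h)|)
      = fun x => (f x - f (x + h)) + 2 * (Set.Iio (0:ℝ)).indicator (fun y => f (y + h)) x := by
    funext x
    by_cases hx : x < 0
    · rw [Set.indicator_of_mem (Set.mem_Iio.mpr hx), hzero x hx]
      rw [zero_sub, abs_neg, abs_of_nonneg (hpos _)]
      ring
    · push_neg at hx
      rw [Set.indicator_of_notMem (by simpa using hx)]
      rw [abs_of_nonneg (sub_nonneg.mpr (hdec (Set.mem_Ici.mpr hx) (Set.mem_Ici.mpr (by linarith [hh0.le])) (le_add_of_nonneg_right hh0.le)))]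
      ring
  have t1 : ∫ x in Set.Iio (0:ℝ), f (x + h) = ∫ x in Set.Iio h, f x := by
    have mp := measurePreserving_add_right (volume : Measure ℝ) h
    have := mp.setIntegral_preimage_emb (measurableEmbedding_addRight h) f (Set.Iio h)
    rw [← this]
    congr 1
    ext x
    simp
  have t2 : ∫ x in Set.Iio h, f x = ∫ x in (0:ℝ)..h, f x := by
    rw [← Set.Iio_union_Ico_eq_Iio hh0.le,
      setIntegral_union (Set.Iio_disjoint_Ici le_rfl |>.mono_right Set.Ico_subset_Ici_self)
        measurableSet_Ico hf.integrableOn hf.integrableOn,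
      setIntegral_eq_zero_of_forall_eq_zero (fun x (hx : x ∈ Set.Iio (0:ℝ)) => hzero x hx), zero_add,
      integral_Ico_eq_integral_Ioo, intervalIntegral.integral_of_le hh0.le,
      integral_Ioc_eq_integral_Ioo]
  have hsub : Integrable (fun x => f x - f (x + h)) := hf.sub hfc
  have int_eq : ∫ x, |f x - f (x + h)| = 2 * ∫ x in (0:ℝ)..h, f x := by
    rw [ptw, integral_add hsub (hind.const_mul 2), integral_sub hf hfc,
      integral_add_right_eq_self f h, sub_self, zero_add, integral_const_mul 2,
      integral_indicator measurableSet_Iio, t1, t2]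
  -- step 4: compare ∫₀^h with ∫₀^a
  have seg : ∀ c : ℝ, 0 ≤ c → ∫ x in c..(c + a), f x ≤ ∫ x in (0:ℝ)..a, f x := by
    intro c hc
    have e : ∫ x in c..(c + a), f x = ∫ x in (0:ℝ)..a, f (x + c) := by
      rw [intervalIntegral.integral_comp_add_right, zero_add, add_comm a c]
    rw [e]
    refine intervalIntegral.integral_mono_on ha0.le
      ((hf.comp_add_right c).intervalIntegrable) (hf.intervalIntegrable) ?_
    intro x hx
    exact hdec (Set.mem_Ici.mpr hx.1) (Set.mem_Ici.mpr (by linarith [hx.1])) (by linarith)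
  have ii : ∀ u v : ℝ, IntervalIntegrable f volume u v := fun u v => hf.intervalIntegrable
  have split4 : ∫ x in (0:ℝ)..(4*a), f x ≤ 4 * ∫ x in (0:ℝ)..a, f x := by
    have s1 : (∫ x in (0:ℝ)..a, f x) + ∫ x in a..(2*a), f x = ∫ x in (0:ℝ)..(2*a), f x :=
      intervalIntegral.integral_add_adjacent_intervals (ii _ _) (ii _ _)
    have s2 : (∫ x in (0:ℝ)..(2*a), f x) + ∫ x in (2*a)..(3*a), f x = ∫ x in (0:ℝ)..(3*a), f x :=
      intervalIntegral.integral_add_adjacent_intervals (ii _ _) (ii _ _)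
    have s3 : (∫ x in (0:ℝ)..(3*a), f x) + ∫ x in (3*a)..(4*a), f x = ∫ x in (0:ℝ)..(4*a), f x :=
      intervalIntegral.integral_add_adjacent_intervals (ii _ _) (ii _ _)
    have g1 : ∫ x in a..(2*a), f x ≤ ∫ x in (0:ℝ)..a, f x := by
      have := seg a ha0.le; rwa [show a + a = 2*a by ring] at this
    have g2 : ∫ x in (2*a)..(3*a), f x ≤ ∫ x in (0:ℝ)..a, f x := by
      have := seg (2*a) (by linarith); rwa [show 2*a + a = 3*a by ring] at this
    have g3 : ∫ x in (3*a)..(4*a), f x ≤ ∫ x in (0:ℝ)..a, f x := by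
      have := seg (3*a) (by linarith); rwa [show 3*a + a = 4*a by ring] at this
    linarith
  have hha : h ≤ 4 * a := by
    rw [hh, ha]
    rw [div_le_iff₀ hz]
    have := pi_le_four
    calc π ≤ 4 := pi_le_four
    _ = 4 * (1/z) * z := by field_simp
  have mono1 : ∫ x in (0:ℝ)..h, f x ≤ ∫ x in (0:ℝ)..(4*a), f x := by
    have s : (∫ x in (0:ℝ)..h, f x) + ∫ x in h..(4*a), f x = ∫ x in (0:ℝ)..(4*a), f x :=
      intervalIntegral.integral_add_adjacent_intervals (ii _ _) (ii _ _)
    have pos : 0 ≤ ∫ x in h..(4*a), f x :=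
      intervalIntegral.integral_nonneg hha (fun x _ => hpos x)
    linarith
  have apos : 0 ≤ ∫ x in (0:ℝ)..a, f x :=
    intervalIntegral.integral_nonneg ha0.le (fun x _ => hpos x)
  have c4 : (4:ℝ) ≤ π / 2 * Real.sqrt 10 := by
    nlinarith [pi_gt_d6, Real.sq_sqrt (show (0:ℝ) ≤ 10 by norm_num), Real.sqrt_nonneg 10]
  calc ‖fourierTransform f z‖ ≤ (1/2) * ∫ x, |f x - f (x + h)| := bound1
    _ = ∫ x in (0:ℝ)..h, f x := by rw [int_eq]; ring
    _ ≤ 4 * ∫ x in (0:ℝ)..a, f x := le_trans mono1 split4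
    _ ≤ π / 2 * Real.sqrt 10 * ∫ x in (0:ℝ)..a, f x := mul_le_mul_of_nonneg_right c4 apos
end

section
/- Let f ∈ L¹(ℝ) be nonnegative, vanish on the negative half-line, and be monotone decreasing on [0, ∞). Let Cf(z) = ∫₀^∞ f(x) cos(xz) dx be the cosine transform. Then for every z > 0, |Cf(z)| ≤ ∫₀^{3π/(2z)} f(x) dx. -/
open MeasureTheory Real Set

/-- Cosine transform estimate: if `f ∈ L¹[0,∞)` is nonnegative and decreasing then
`|Cf(z)| ≤ ∫₀^{3π/(2z)} f(x) dx` for all `z > 0`. -/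
theorem cosine_transform_bound (f : ℝ → ℝ) (hf : Integrable f)
    (hpos : ∀ x, 0 ≤ f x) (hzero : ∀ x < (0:ℝ), f x = 0)
    (hdec : AntitoneOn f (Set.Ici 0)) :
    ∀ z : ℝ, 0 < z →
      |∫ x in Set.Ioi (0:ℝ), f x * Real.cos (x * z)| ≤
        ∫ x in (0:ℝ)..(3 * π / (2 * z)), f x := by
  intro z hz
  set h : ℝ := π / z with hh_def
  have hh : 0 < h := div_pos pi_pos hz
  have hzπ : h * z = π := div_mul_cancel₀ _ hz.ne'
  -- integrability
  have hcosm : AEStronglyMeasurable (fun x : ℝ => Real.cos (x * z)) volume :=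
    (Real.continuous_cos.comp (continuous_id.mul continuous_const)).aestronglyMeasurable
  have hcosb : ∃ C, ∀ x : ℝ, ‖Real.cos (x * z)‖ ≤ C :=
    ⟨1, fun x => by simpa using Real.abs_cos_le_one (x * z)⟩
  have hfc : Integrable (fun x => f x * Real.cos (x * z)) := by
    simpa [mul_comm] using hf.bdd_mul hcosm (Filter.Eventually.of_forall hcosb.choose_spec)
  have hfs : Integrable (fun x => f (x + h)) := hf.comp_add_right h
  have hfsc : Integrable (fun x => f (x + h) * Real.cos (x * z)) := by
    simpa [mul_comm] using hfs.bdd_mul hcosm (Filter.Eventually.of_forall hcosb.choose_spec)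
  set I := ∫ x : ℝ, f x * Real.cos (x * z) with hI_def
  -- the set integral over Ioi 0 equals the full integral
  have h0 : ∫ x in Set.Ioi (0:ℝ), f x * Real.cos (x * z) = I := by
    apply setIntegral_eq_integral_of_ae_compl_eq_zero
    filter_upwards [compl_mem_ae_iff.2 (volume_singleton (a := (0:ℝ)))] with x hx hx'
    have : x < 0 := lt_of_le_of_ne (by simpa using hx') (by simpa using hx)
    simp [hzero x this]
  -- translation identity
  have h1 : ∫ x : ℝ, f (x + h) * Real.cos (x * z) = -I := by
    have key := integral_add_right_eq_self (μ := volume)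
      (fun y : ℝ => f y * Real.cos ((y - h) * z)) h
    have l1 : ∫ x : ℝ, f (x + h) * Real.cos ((x + h - h) * z)
        = ∫ x : ℝ, f (x + h) * Real.cos (x * z) := by
      simp [add_sub_cancel_right]
    have l2 : ∫ y : ℝ, f y * Real.cos ((y - h) * z) = -I := by
      rw [hI_def, ← integral_neg]
      congr 1; funext y
      rw [sub_mul, hzπ, Real.cos_sub_pi]
      ring
    rw [l1] at key
    rw [key, l2]
  have h2 : (2:ℝ) * I = ∫ x : ℝ, (f x - f (x + h)) * Real.cos (x * z) := by
    have : (fun x : ℝ => (f x - f (x + h)) * Real.cos (x * z))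
        = fun x => f x * Real.cos (x * z) - f (x + h) * Real.cos (x * z) := by
      funext x; ring
    rw [this, integral_sub hfc hfsc, h1]
    ring
  -- pointwise identity for the absolute value
  have habs : ∀ x : ℝ, |f x - f (x + h)|
      = (f x - f (x + h)) + 2 * Set.indicator (Set.Iio (0:ℝ)) (fun t => f (t + h)) x := by
    intro x
    rcases lt_or_ge x 0 with hx | hx
    · rw [Set.indicator_of_mem (by exact hx : x ∈ Set.Iio (0:ℝ)), hzero x hx]
      rw [abs_of_nonpos (by simpa using hpos (x + h))]
      ring
    · rw [Set.indicator_of_notMem (by simpa using hx)]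
      rw [abs_of_nonneg (sub_nonneg.2 (hdec hx (le_trans hx (le_add_of_nonneg_right hh.le))
        (le_add_of_nonneg_right hh.le)))]
      ring
  -- integral of the indicator term
  have hind : ∫ x : ℝ, Set.indicator (Set.Iio (0:ℝ)) (fun t => f (t + h)) x
      = ∫ x in Set.Ico (0:ℝ) h, f x := by
    have e1 : (fun x : ℝ => Set.indicator (Set.Iio (0:ℝ)) (fun t => f (t + h)) x)
        = fun x => Set.indicator (Set.Iio h) f (x + h) := by
      funext x
      rcases lt_or_ge x 0 with hx | hx
      · rw [Set.indicator_of_mem (by exact hx), Set.indicator_of_mem]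
        simpa using hx
      · rw [Set.indicator_of_notMem (by simpa using hx), Set.indicator_of_notMem]
        simp [hx]
    rw [e1, integral_add_right_eq_self (μ := volume) (Set.indicator (Set.Iio h) f) h,
      integral_indicator measurableSet_Iio]
    have : Set.Iio h = Set.Iio (0:ℝ) ∪ Set.Ico 0 h := by
      rw [Iio_union_Ico_eq_Iio hh.le]
    rw [this, setIntegral_union (by
        rw [Set.disjoint_left]; intro a ha hb; exact absurd hb.1 (not_le.2 ha))
      measurableSet_Ico hf.integrableOn hf.integrableOn]
    have hz0 : ∫ x in Set.Iio (0:ℝ), f x = 0 :=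
      setIntegral_eq_zero_of_forall_eq_zero (fun x hx => hzero x hx)
    rw [hz0, zero_add]
  have hg : Integrable (fun x : ℝ => f x - f (x + h)) := hf.sub hfs
  have hzero_int : ∫ x : ℝ, (f x - f (x + h)) = 0 := by
    rw [integral_sub hf hfs, integral_add_right_eq_self (μ := volume) f h, sub_self]
  have hgabs : Integrable (fun x => |f x - f (x + h)|) := hg.abs
  have hkey : ∫ x : ℝ, |f x - f (x + h)| = 2 * ∫ x in Set.Ico (0:ℝ) h, f x := by
    calc ∫ x : ℝ, |f x - f (x + h)|
        = ∫ x : ℝ, ((f x - f (x + h))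
            + 2 * Set.indicator (Set.Iio (0:ℝ)) (fun t => f (t + h)) x) := by
          congr 1; funext x; exact habs x
      _ = (∫ x : ℝ, (f x - f (x + h)))
            + 2 * ∫ x : ℝ, Set.indicator (Set.Iio (0:ℝ)) (fun t => f (t + h)) x := by
          rw [integral_add hg ((hfs.indicator measurableSet_Iio).const_mul 2),
            integral_const_mul]
      _ = 2 * ∫ x in Set.Ico (0:ℝ) h, f x := by rw [hzero_int, hind, zero_add]
  -- bound |2 I|
  have hbound : |(2:ℝ) * I| ≤ 2 * ∫ x in Set.Ico (0:ℝ) h, f x := by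
    rw [h2, ← hkey]
    have := norm_integral_le_of_norm_le (μ := volume)
      (f := fun x : ℝ => (f x - f (x + h)) * Real.cos (x * z)) hgabs
      (Filter.Eventually.of_forall fun x => by
        rw [Real.norm_eq_abs, abs_mul]
        exact (mul_le_mul_of_nonneg_left (Real.abs_cos_le_one _) (abs_nonneg _)).trans_eq (mul_one _))
    simpa [Real.norm_eq_abs] using this
  have hIle : |I| ≤ ∫ x in Set.Ico (0:ℝ) h, f x := by
    rw [abs_mul, abs_two] at hbound
    linarith [hbound]
  rw [h0]
  have hb : h ≤ 3 * π / (2 * z) := by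
    rw [hh_def, div_le_div_iff₀ hz (by positivity)]
    nlinarith [pi_pos]
  have hIco : ∫ x in Set.Ico (0:ℝ) h, f x = ∫ x in (0:ℝ)..h, f x := by
    rw [intervalIntegral.integral_of_le hh.le, integral_Ico_eq_integral_Ioo,
      integral_Ioc_eq_integral_Ioo]
  have hmono : ∫ x in (0:ℝ)..h, f x ≤ ∫ x in (0:ℝ)..(3 * π / (2 * z)), f x := by
    apply intervalIntegral.integral_mono_interval le_rfl hh.le hb
    · filter_upwards with x; exact hpos x
    · exact hf.intervalIntegrable
  calc |I| ≤ ∫ x in Set.Ico (0:ℝ) h, f x := hIle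
    _ = ∫ x in (0:ℝ)..h, f x := hIco
    _ ≤ _ := hmono
end

section
/- Let f ∈ L¹(ℝ) be nonnegative, vanish on the negative half-line, and crest once at the point b ≥ 0 (i.e. f is monotone increasing on [0, b] and monotone decreasing on [b, ∞)). Then for every z > 0, |f̂(z)| ≤ (π/2)·√10 · ∫_{b−1/z}^{b+1/z} f(x) dx. -/
open MeasureTheory Real Set

/-! ### Auxiliary lemmas for the proof -/

private lemma aux_int' (f : ℝ → ℝ) (hf : Integrable f) (z : ℝ) :
    Integrable (fun x => (f x : ℂ) * Complex.exp (-(x * z) * Complex.I)) := by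
  apply Integrable.mono' hf.abs
  · exact (Complex.continuous_ofReal.comp_aestronglyMeasurable hf.aestronglyMeasurable).mul
      (Complex.continuous_exp.comp (by continuity)).aestronglyMeasurable
  · filter_upwards with x
    simp [Complex.norm_exp]

private lemma aux_shift' (g : ℝ → ℂ) (h : ℝ) : ∫ x, g (x + h) = ∫ x, g x :=
  (measurePreserving_add_right volume h).integral_comp (measurableEmbedding_addRight h) g

private lemma aux_set_shift' (f : ℝ → ℝ) (h : ℝ) (s : Set ℝ) :
    ∫ x in ((fun x => x + h) ⁻¹' s), f (x + h) = ∫ y in s, f y :=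
  (measurePreserving_add_right volume h).setIntegral_preimage_emb
    (measurableEmbedding_addRight h) f s

private lemma stepA' (f : ℝ → ℝ) (hf : Integrable f) (z : ℝ) (hz : 0 < z) :
    ‖fourierTransform f z‖ ≤ (∫ x, |f x - f (x + π / z)|) / 2 := by
  set h : ℝ := π / z with hh
  have hhz : h * z = π := div_mul_cancel₀ _ hz.ne'
  have hT : Integrable (fun x => f (x + h)) := hf.comp_add_right h
  have hF := aux_int' f hf z
  have hG := aux_int' (fun x => f (x + h)) hT z
  have key1 : ∫ x : ℝ, (f (x + h) : ℂ) * Complex.exp (-(((x + h : ℝ) : ℂ) * z) * Complex.I)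
      = fourierTransform f z :=
    aux_shift' (fun x => (f x : ℂ) * Complex.exp (-(x * z) * Complex.I)) h
  have keyNeg : ∫ x : ℝ, (f (x + h) : ℂ) * Complex.exp (-(x * z) * Complex.I)
      = - fourierTransform f z := by
    rw [← key1, ← integral_neg]
    congr 1
    funext x
    have h1 : (-(((x + h : ℝ) : ℂ) * z) * Complex.I : ℂ)
        = -((x : ℂ) * z) * Complex.I + -(π * Complex.I) := by
      push_cast
      rw [← hhz]
      push_cast
      ring
    rw [h1, Complex.exp_add, Complex.exp_neg, Complex.exp_pi_mul_I]
    norm_num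
  have hsplit : fourierTransform f z
      = (∫ x : ℝ, ((f x - f (x + h) : ℝ) : ℂ) * Complex.exp (-(x * z) * Complex.I)) / 2 := by
    have e1 : ∫ x : ℝ, ((f x - f (x + h) : ℝ) : ℂ) * Complex.exp (-(x * z) * Complex.I)
        = (∫ x : ℝ, (f x : ℂ) * Complex.exp (-(x * z) * Complex.I))
          - ∫ x : ℝ, (f (x + h) : ℂ) * Complex.exp (-(x * z) * Complex.I) := by
      rw [← integral_sub hF hG]
      congr 1
      funext x
      push_cast
      ring
    rw [e1, keyNeg]
    show fourierTransform f z = (fourierTransform f z - -fourierTransform f z) / 2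
    ring
  rw [hsplit, norm_div]
  simp only [Complex.norm_ofNat, Complex.norm_two]
  gcongr
  calc ‖∫ x : ℝ, ((f x - f (x + h) : ℝ) : ℂ) * Complex.exp (-(x * z) * Complex.I)‖
      ≤ ∫ x : ℝ, ‖((f x - f (x + h) : ℝ) : ℂ) * Complex.exp (-(x * z) * Complex.I)‖ := by
        exact norm_integral_le_integral_norm _
    _ = ∫ x : ℝ, |f x - f (x + h)| := by
        congr 1
        funext x
        rw [norm_mul, Complex.norm_real,
          Complex.norm_exp]
        simp

private lemma stepB' (f : ℝ → ℝ) (hf : Integrable f) (hpos : ∀ x, 0 ≤ f x) (b h : ℝ)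
    (hh : 0 ≤ h) (hmono : MonotoneOn f (Iic b)) (hanti : AntitoneOn f (Ici b)) :
    ∫ x, |f x - f (x + h)| ≤ 2 * ((∫ x in (b - h)..b, f x) + ∫ x in b..(b + h), f x) := by
  have hT : Integrable (fun x => f (x + h)) := hf.comp_add_right h
  have hD : Integrable (fun x => |f x - f (x + h)|) := (hf.sub hT).abs
  have hbh : b - h ≤ b := by linarith
  have hbh' : b ≤ b + h := by linarith
  have sh1 : ∫ x in Iic (b - h), f (x + h) = ∫ x in Iic b, f x := by
    have := aux_set_shift' f h (Iic b)
    rwa [preimage_add_const_Iic] at this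
  have sh2 : ∫ x in Ioi b, f (x + h) = ∫ x in Ioi (b + h), f x := by
    have := aux_set_shift' f h (Ioi (b + h))
    rw [preimage_add_const_Ioi] at this
    simpa using this
  have sh3 : ∫ x in Ioc (b - h) b, f (x + h) = ∫ x in Ioc b (b + h), f x := by
    have := aux_set_shift' f h (Ioc b (b + h))
    rw [preimage_add_const_Ioc] at this
    simpa using this
  have IicSub := intervalIntegral.integral_Iic_sub_Iic (hf.integrableOn (s := Iic (b - h)))
    (hf.integrableOn (s := Iic b))
  have p1 : ∫ x in Iic (b - h), |f x - f (x + h)| = ∫ x in (b - h)..b, f x := by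
    have e : ∫ x in Iic (b - h), |f x - f (x + h)|
        = ∫ x in Iic (b - h), (f (x + h) - f x) := by
      apply setIntegral_congr_fun measurableSet_Iic
      intro x hx
      have hx' : x ≤ b - h := hx
      have h1 : f x ≤ f (x + h) :=
        hmono (show x ∈ Iic b by simp only [mem_Iic]; linarith)
          (show x + h ∈ Iic b by simp only [mem_Iic]; linarith) (by linarith)
      show |f x - f (x + h)| = f (x + h) - f x
      rw [abs_sub_comm, abs_of_nonneg (by linarith)]
    rw [e, integral_sub hT.integrableOn hf.integrableOn, sh1, ← IicSub]
  have p3 : ∫ x in Ioi b, |f x - f (x + h)| = ∫ x in b..(b + h), f x := by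
    have e : ∫ x in Ioi b, |f x - f (x + h)| = ∫ x in Ioi b, (f x - f (x + h)) := by
      apply setIntegral_congr_fun measurableSet_Ioi
      intro x hx
      have hx' : b < x := hx
      have h1 : f (x + h) ≤ f x :=
        hanti (show x ∈ Ici b by simp only [mem_Ici]; linarith)
          (show x + h ∈ Ici b by simp only [mem_Ici]; linarith) (by linarith)
      show |f x - f (x + h)| = f x - f (x + h)
      rw [abs_of_nonneg (by linarith)]
    have A1 := intervalIntegral.integral_Iic_add_Ioi (b := b)
      (hf.integrableOn) (hf.integrableOn)
    have A2 := intervalIntegral.integral_Iic_add_Ioi (b := b + h)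
      (hf.integrableOn) (hf.integrableOn)
    have B := intervalIntegral.integral_Iic_sub_Iic (hf.integrableOn (s := Iic b))
      (hf.integrableOn (s := Iic (b + h)))
    rw [e, integral_sub hf.integrableOn hT.integrableOn, sh2]
    linarith
  have oc1 : ∫ x in (b - h)..b, f x = ∫ x in Ioc (b - h) b, f x :=
    intervalIntegral.integral_of_le hbh
  have oc2 : ∫ x in b..(b + h), f x = ∫ x in Ioc b (b + h), f x :=
    intervalIntegral.integral_of_le hbh'
  have p2 : ∫ x in Ioc (b - h) b, |f x - f (x + h)|
      ≤ (∫ x in (b - h)..b, f x) + ∫ x in b..(b + h), f x := by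
    have e : ∫ x in Ioc (b - h) b, |f x - f (x + h)|
        ≤ ∫ x in Ioc (b - h) b, (f x + f (x + h)) := by
      apply setIntegral_mono_on hD.integrableOn (hf.add hT).integrableOn measurableSet_Ioc
      intro x _
      have h1 := hpos x
      have h2 := hpos (x + h)
      show |f x - f (x + h)| ≤ f x + f (x + h)
      refine (abs_sub _ _).trans ?_
      rw [abs_of_nonneg h1, abs_of_nonneg h2]
    have e2 : ∫ x in Ioc (b - h) b, (f x + f (x + h))
        = (∫ x in Ioc (b - h) b, f x) + ∫ x in Ioc (b - h) b, f (x + h) :=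
      integral_add hf.integrableOn hT.integrableOn
    rw [oc1, oc2]
    rw [e2, sh3] at e
    exact e
  have split1 := intervalIntegral.integral_Iic_add_Ioi (b := b)
    (hD.integrableOn) (hD.integrableOn)
  have split2 : ∫ x in Iic b, |f x - f (x + h)|
      = (∫ x in Iic (b - h), |f x - f (x + h)|) + ∫ x in Ioc (b - h) b, |f x - f (x + h)| := by
    rw [← Iic_union_Ioc_eq_Iic hbh]
    exact setIntegral_union (Iic_disjoint_Ioc le_rfl) measurableSet_Ioc
      hD.integrableOn hD.integrableOn
  linarith

private lemma stepCL' (f : ℝ → ℝ) (hf : Integrable f) (hpos : ∀ x, 0 ≤ f x) (b u : ℝ)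
    (hu : 0 < u) (hmono : MonotoneOn f (Iic b)) :
    ∫ x in (b - π * u)..b, f x ≤ 4 * ∫ x in (b - u)..b, f x := by
  have hπ : π ≤ 4 := pi_le_four
  have hπ3 : 3 < π := pi_gt_three
  have hii : ∀ a c : ℝ, IntervalIntegrable f volume a c := fun a c => hf.intervalIntegrable
  have block : ∀ d : ℝ, 0 ≤ d → ∫ x in (b - u - d)..(b - d), f x ≤ ∫ x in (b - u)..b, f x := by
    intro d hd
    have e : ∫ x in (b - u - d)..(b - d), f x = ∫ x in (b - u)..b, f (x - d) := by
      rw [intervalIntegral.integral_comp_sub_right f d]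
    rw [e]
    apply intervalIntegral.integral_mono_on (by linarith) ((hf.comp_sub_right d).intervalIntegrable)
      (hii _ _)
    intro x hx
    exact hmono (show x - d ∈ Iic b by simp only [mem_Iic]; linarith [hx.2])
      (show x ∈ Iic b from hx.2) (by linarith)
  have b1 : ∫ x in (b - 2 * u)..(b - u), f x ≤ ∫ x in (b - u)..b, f x := by
    have := block u hu.le
    rwa [show b - u - u = b - 2 * u by ring] at this
  have b2 : ∫ x in (b - 3 * u)..(b - 2 * u), f x ≤ ∫ x in (b - u)..b, f x := by
    have := block (2 * u) (by linarith)
    rwa [show b - u - 2 * u = b - 3 * u by ring] at this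
  have b3 : ∫ x in (b - 4 * u)..(b - 3 * u), f x ≤ ∫ x in (b - u)..b, f x := by
    have := block (3 * u) (by linarith)
    rwa [show b - u - 3 * u = b - 4 * u by ring] at this
  have a1 := intervalIntegral.integral_add_adjacent_intervals (a := b - 4 * u) (b := b - 3 * u)
    (c := b) (hii _ _) (hii _ _)
  have a2 := intervalIntegral.integral_add_adjacent_intervals (a := b - 3 * u) (b := b - 2 * u)
    (c := b) (hii _ _) (hii _ _)
  have a3 := intervalIntegral.integral_add_adjacent_intervals (a := b - 2 * u) (b := b - u)
    (c := b) (hii _ _) (hii _ _)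
  have a0 := intervalIntegral.integral_add_adjacent_intervals (a := b - 4 * u) (b := b - π * u)
    (c := b) (hii _ _) (hii _ _)
  have n0 : 0 ≤ ∫ x in (b - 4 * u)..(b - π * u), f x :=
    intervalIntegral.integral_nonneg (by nlinarith) (fun x _ => hpos x)
  linarith

private lemma stepCR' (f : ℝ → ℝ) (hf : Integrable f) (hpos : ∀ x, 0 ≤ f x) (b u : ℝ)
    (hu : 0 < u) (hanti : AntitoneOn f (Ici b)) :
    ∫ x in b..(b + π * u), f x ≤ 4 * ∫ x in b..(b + u), f x := by
  have hπ : π ≤ 4 := pi_le_four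
  have hπ3 : 3 < π := pi_gt_three
  have hii : ∀ a c : ℝ, IntervalIntegrable f volume a c := fun a c => hf.intervalIntegrable
  have block : ∀ d : ℝ, 0 ≤ d → ∫ x in (b + d)..(b + u + d), f x ≤ ∫ x in b..(b + u), f x := by
    intro d hd
    have e : ∫ x in (b + d)..(b + u + d), f x = ∫ x in b..(b + u), f (x + d) := by
      rw [intervalIntegral.integral_comp_add_right f d]
    rw [e]
    apply intervalIntegral.integral_mono_on (by linarith) ((hf.comp_add_right d).intervalIntegrable)
      (hii _ _)
    intro x hx
    exact hanti (show x ∈ Ici b from hx.1)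
      (show x + d ∈ Ici b by simp only [mem_Ici]; linarith [hx.1]) (by linarith)
  have b1 : ∫ x in (b + u)..(b + 2 * u), f x ≤ ∫ x in b..(b + u), f x := by
    have := block u hu.le
    rwa [show b + u + u = b + 2 * u by ring] at this
  have b2 : ∫ x in (b + 2 * u)..(b + 3 * u), f x ≤ ∫ x in b..(b + u), f x := by
    have := block (2 * u) (by linarith)
    rwa [show b + u + 2 * u = b + 3 * u by ring] at this
  have b3 : ∫ x in (b + 3 * u)..(b + 4 * u), f x ≤ ∫ x in b..(b + u), f x := by
    have := block (3 * u) (by linarith)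
    rwa [show b + u + 3 * u = b + 4 * u by ring] at this
  have a1 := intervalIntegral.integral_add_adjacent_intervals (a := b) (b := b + u)
    (c := b + 4 * u) (hii _ _) (hii _ _)
  have a2 := intervalIntegral.integral_add_adjacent_intervals (a := b + u) (b := b + 2 * u)
    (c := b + 4 * u) (hii _ _) (hii _ _)
  have a3 := intervalIntegral.integral_add_adjacent_intervals (a := b + 2 * u) (b := b + 3 * u)
    (c := b + 4 * u) (hii _ _) (hii _ _)
  have a0 := intervalIntegral.integral_add_adjacent_intervals (a := b) (b := b + π * u)
    (c := b + 4 * u) (hii _ _) (hii _ _)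
  have n0 : 0 ≤ ∫ x in (b + π * u)..(b + 4 * u), f x :=
    intervalIntegral.integral_nonneg (by nlinarith) (fun x _ => hpos x)
  linarith

/-- Lemma: if `f ∈ L¹[0,∞)` is nonnegative and crests once at `b ≥ 0` then
`|f̂(z)| ≤ (π/2)·√10 · ∫_{b-1/z}^{b+1/z} f(x) dx` for all `z > 0`. -/
theorem fourier_bound_of_one_crest (f : ℝ → ℝ) (hf : Integrable f)
    (hpos : ∀ x, 0 ≤ f x) (hzero : ∀ x < (0:ℝ), f x = 0)
    (b : ℝ) (hb : 0 ≤ b)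
    (hmono : MonotoneOn f (Set.Iic b)) (hanti : AntitoneOn f (Set.Ici b)) :
    ∀ z : ℝ, 0 < z →
      ‖fourierTransform f z‖ ≤
        (π / 2) * Real.sqrt 10 * ∫ x in (b - 1/z)..(b + 1/z), f x := by
  intro z hz
  have hu : (0:ℝ) < 1 / z := by positivity
  set u : ℝ := 1 / z with hu_def
  have hπu : π / z = π * u := by rw [hu_def]; ring
  have A := stepA' f hf z hz
  have B := stepB' f hf hpos b (π / z) (by positivity) hmono hanti
  rw [hπu] at A B
  have CL := stepCL' f hf hpos b u hu hmono
  have CR := stepCR' f hf hpos b u hu hanti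
  have adj := intervalIntegral.integral_add_adjacent_intervals (a := b - u) (b := b)
    (c := b + u) (hf.intervalIntegrable) (hf.intervalIntegrable)
  have Jnn : 0 ≤ ∫ x in (b - u)..(b + u), f x :=
    intervalIntegral.integral_nonneg (by linarith) (fun x _ => hpos x)
  have s1 : (3:ℝ) ≤ Real.sqrt 10 := by
    rw [show (3:ℝ) = Real.sqrt 9 by
      rw [show (9:ℝ) = 3 ^ 2 by norm_num, Real.sqrt_sq (by norm_num)]]
    exact Real.sqrt_le_sqrt (by norm_num)
  have s2 : (3:ℝ) < π := pi_gt_three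
  have hc : (4:ℝ) ≤ π / 2 * Real.sqrt 10 := by nlinarith
  have final : 4 * ∫ x in (b - u)..(b + u), f x
      ≤ π / 2 * Real.sqrt 10 * ∫ x in (b - u)..(b + u), f x :=
    mul_le_mul_of_nonneg_right hc Jnn
  linarith
end

section
/- For every positive integer N there exists a nonnegative function f ∈ L¹(ℝ), supported in [0, ∞), with #crests(f) = 5N, and a point z > 0 such that |f̂(z)| / (π·√10 · ∫₀^{1/z} f*(x) dx) > N. In fact f(x) = Σ_{i=0}^{5N−1} χ_{[2i, 2i+1]}(x) works: for z = 2lπ with l ∈ ℕ large enough that z > 1/(5N), one has |f̂(z)| = 10N/z and ∫₀^{1/z} f*(x) dx = 1/z, so the quotient equals 10N/(π√10) = N·√10/π > N. -/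
open MeasureTheory Real Set

/-! ### Auxiliary definitions and lemmas -/

/-- The example function: sum of indicators of `[2i, 2i+1]` for `i < n`. -/
noncomputable def crestF (n : ℕ) : ℝ → ℝ := fun x =>
  ∑ i ∈ Finset.range n,
    Set.indicator (Set.Icc (2 * (i:ℝ)) (2 * (i:ℝ) + 1)) (fun _ => (1:ℝ)) x

lemma two_mul_disj {i j : ℕ} (h : i ≠ j) {t : ℝ}
    (ht : t ∈ Set.Icc (2 * (i:ℝ)) (2 * (i:ℝ) + 1))
    (ht' : t ∈ Set.Icc (2 * (j:ℝ)) (2 * (j:ℝ) + 1)) : False := by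
  rcases lt_or_gt_of_ne h with hij | hij
  · have h1 : (i:ℝ) + 1 ≤ (j:ℝ) := by exact_mod_cast hij
    have := ht.2; have := ht'.1; linarith
  · have h1 : (j:ℝ) + 1 ≤ (i:ℝ) := by exact_mod_cast hij
    have := ht.1; have := ht'.2; linarith

lemma crestF_eq_one {n i : ℕ} (hi : i < n) {t : ℝ}
    (ht : t ∈ Set.Icc (2 * (i:ℝ)) (2 * (i:ℝ) + 1)) : crestF n t = 1 := by
  rw [crestF, Finset.sum_eq_single_of_mem i (Finset.mem_range.2 hi)]
  · simp [Set.indicator_of_mem ht]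
  · intro j _ hne
    exact Set.indicator_of_notMem (fun ht' => two_mul_disj hne ht' ht) _

lemma crestF_nonneg (n : ℕ) (x : ℝ) : 0 ≤ crestF n x :=
  Finset.sum_nonneg fun _ _ => Set.indicator_nonneg (fun _ _ => zero_le_one) _

lemma crestF_le_one (n : ℕ) (x : ℝ) : crestF n x ≤ 1 := by
  by_cases h : ∃ i, i < n ∧ x ∈ Set.Icc (2 * (i:ℝ)) (2 * (i:ℝ) + 1)
  · obtain ⟨i, hi, hx⟩ := h
    rw [crestF_eq_one hi hx]
  · push_neg at h
    have hz : crestF n x = 0 := by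
      rw [crestF]
      exact Finset.sum_eq_zero fun i hi =>
        Set.indicator_of_notMem (h i (Finset.mem_range.1 hi)) _
    rw [hz]; norm_num

lemma crestF_neg {n : ℕ} {x : ℝ} (hx : x < 0) : crestF n x = 0 := by
  rw [crestF]
  refine Finset.sum_eq_zero fun i _ => Set.indicator_of_notMem ?_ _
  intro hm
  have h1 := hm.1
  have : (0:ℝ) ≤ 2 * (i:ℝ) := by positivity
  linarith

lemma crestF_mid {n k : ℕ} (hk : k < n) : crestF n (2 * (k:ℝ) + 1/2) = 1 :=
  crestF_eq_one hk (Set.mem_Icc.2 ⟨by linarith, by linarith⟩)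

lemma crestF_gap {n k : ℕ} : crestF n (2 * (k:ℝ) + 3/2) = 0 := by
  rw [crestF]
  refine Finset.sum_eq_zero fun i _ => Set.indicator_of_notMem ?_ _
  intro hm
  obtain ⟨h1, h2⟩ := hm
  have hik : i ≤ k := by
    by_contra hc
    have : (k:ℝ) + 1 ≤ (i:ℝ) := by exact_mod_cast Nat.not_le.1 hc
    linarith
  have hki : k < i := by
    by_contra hc
    have : (i:ℝ) ≤ (k:ℝ) := by exact_mod_cast Nat.not_lt.1 hc
    linarith
  omega

lemma crestF_integrable (n : ℕ) : Integrable (crestF n) := by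
  refine integrable_finset_sum _ fun i _ => ?_
  exact (integrable_indicator_iff measurableSet_Icc).2
    (integrableOn_const measure_Icc_lt_top.ne)

lemma crestsOnce_ind (a : ℝ) :
    CrestsOnce (Set.indicator (Set.Icc a (a + 1)) (fun _ => (1:ℝ))) := by
  refine ⟨a, ?_, ?_⟩
  · intro x hx y hy hxy
    by_cases hxm : x ∈ Set.Icc a (a + 1)
    · have hxa : x = a := le_antisymm hx hxm.1
      have hya : y = a := le_antisymm hy (hxa ▸ hxy)
      rw [hxa, hya]
    · rw [Set.indicator_of_notMem hxm]
      exact Set.indicator_nonneg (fun _ _ => zero_le_one) _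
  · intro x hx y hy hxy
    by_cases hym : y ∈ Set.Icc a (a + 1)
    · have hxm : x ∈ Set.Icc a (a + 1) := ⟨hx, le_trans hxy hym.2⟩
      rw [Set.indicator_of_mem hxm, Set.indicator_of_mem hym]
    · rw [Set.indicator_of_notMem hym]
      exact Set.indicator_nonneg (fun _ _ => zero_le_one) _

lemma hasCrestDecomp_crestF (n : ℕ) : HasCrestDecomp (crestF n) n := by
  refine ⟨fun i : Fin n =>
    Set.indicator (Set.Icc (2 * ((i:ℕ):ℝ)) (2 * ((i:ℕ):ℝ) + 1)) (fun _ => (1:ℝ)),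
    ?_, ?_, ?_, ?_⟩
  · intro i x
    exact Set.indicator_nonneg (fun _ _ => zero_le_one) _
  · intro i
    exact crestsOnce_ind (2 * ((i:ℕ):ℝ))
  · intro i j hij
    have hemp : (Set.Icc (2 * ((i:ℕ):ℝ)) (2 * ((i:ℕ):ℝ) + 1) ∩
        Set.Icc (2 * ((j:ℕ):ℝ)) (2 * ((j:ℕ):ℝ) + 1)) = (∅ : Set ℝ) := by
      refine Set.eq_empty_iff_forall_notMem.2 fun t ht => ?_
      exact two_mul_disj (fun h => hij (Fin.ext h)) ht.1 ht.2
    have hsub : Function.support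
          (Set.indicator (Set.Icc (2 * ((i:ℕ):ℝ)) (2 * ((i:ℕ):ℝ) + 1)) (fun _ => (1:ℝ))) ∩
        Function.support
          (Set.indicator (Set.Icc (2 * ((j:ℕ):ℝ)) (2 * ((j:ℕ):ℝ) + 1)) (fun _ => (1:ℝ)))
        ⊆ (∅ : Set ℝ) := by
      rw [← hemp]
      exact Set.inter_subset_inter Set.support_indicator_subset
        Set.support_indicator_subset
    exact measure_mono_null hsub measure_empty
  · intro x
    exact (Fin.sum_univ_eq_sum_range
      (fun i : ℕ => Set.indicator (Set.Icc (2 * (i:ℝ)) (2 * (i:ℝ) + 1))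
        (fun _ => (1:ℝ)) x) n).symm

lemma not_hasCrestDecomp_crestF {n m : ℕ} (hm : m < n) :
    ¬ HasCrestDecomp (crestF n) m := by
  rintro ⟨g, hg0, hgc, -, hsum⟩
  have hex : ∀ k : Fin n, ∃ i : Fin m, g i (2 * ((k:ℕ):ℝ) + 1/2) ≠ 0 := by
    intro k
    by_contra hc
    push_neg at hc
    have h1 : crestF n (2 * ((k:ℕ):ℝ) + 1/2) = 1 := crestF_mid k.isLt
    rw [hsum] at h1
    simp only [hc, Finset.sum_const_zero] at h1
    norm_num at h1
  choose φ hφ using hex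
  have key : ∀ k k' : Fin n, (k:ℕ) < (k':ℕ) → φ k ≠ φ k' := by
    intro k k' hlt heq
    set i := φ k with hi
    have hxk : 0 < g i (2 * ((k:ℕ):ℝ) + 1/2) :=
      lt_of_le_of_ne (hg0 i _) (Ne.symm (hφ k))
    have hxk' : 0 < g i (2 * ((k':ℕ):ℝ) + 1/2) := by
      rw [heq]
      exact lt_of_le_of_ne (hg0 (φ k') _) (Ne.symm (hφ k'))
    have hz : g i (2 * ((k:ℕ):ℝ) + 3/2) = 0 := by
      have h0 : (∑ j, g j (2 * ((k:ℕ):ℝ) + 3/2)) = 0 := by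
        rw [← hsum]; exact crestF_gap
      exact (Finset.sum_eq_zero_iff_of_nonneg fun j _ => hg0 j _).1 h0 i
        (Finset.mem_univ i)
    obtain ⟨b, hmono, hanti⟩ := hgc i
    have hkk' : ((k:ℕ):ℝ) + 1 ≤ ((k':ℕ):ℝ) := by exact_mod_cast hlt
    rcases le_total (2 * ((k:ℕ):ℝ) + 3/2) b with hzb | hbz
    · have := hmono (show (2 * ((k:ℕ):ℝ) + 1/2) ∈ Set.Iic b by
          simp only [Set.mem_Iic]; linarith)
        (show (2 * ((k:ℕ):ℝ) + 3/2) ∈ Set.Iic b from hzb) (by linarith)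
      rw [hz] at this
      linarith
    · have := hanti (show (2 * ((k:ℕ):ℝ) + 3/2) ∈ Set.Ici b from hbz)
        (show (2 * ((k':ℕ):ℝ) + 1/2) ∈ Set.Ici b by
          simp only [Set.mem_Ici]; linarith) (by linarith)
      rw [hz] at this
      linarith
  have hinj : Function.Injective φ := by
    intro k k' heq
    by_contra hne
    have hv : (k:ℕ) ≠ (k':ℕ) := fun h => hne (Fin.ext h)
    rcases hv.lt_or_gt with h | h
    · exact key k k' h heq
    · exact key k' k h heq.symm
  have := Fintype.card_le_of_injective φ hinj
  simp only [Fintype.card_fin] at this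
  omega

lemma fourier_crestF (n : ℕ) :
    fourierTransform (crestF n) π = (n:ℂ) * (2 / ((π:ℂ) * Complex.I)) := by
  have hπI : (π:ℂ) * Complex.I ≠ 0 := by
    simp [Real.pi_ne_zero, Complex.I_ne_zero]
  have step1 : ∀ x : ℝ, ((crestF n x : ℝ) : ℂ) * Complex.exp (-(x * π) * Complex.I)
      = ∑ i ∈ Finset.range n, Set.indicator (Set.Icc (2 * (i:ℝ)) (2 * (i:ℝ) + 1))
          (fun y : ℝ => Complex.exp (-((π:ℂ) * Complex.I) * (y:ℂ))) x := by
    intro x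
    have harg : -((x:ℂ) * (π:ℂ)) * Complex.I = -((π:ℂ) * Complex.I) * (x:ℂ) := by
      ring
    rw [crestF, Complex.ofReal_sum, Finset.sum_mul]
    refine Finset.sum_congr rfl fun i _ => ?_
    by_cases hx : x ∈ Set.Icc (2 * (i:ℝ)) (2 * (i:ℝ) + 1)
    · rw [Set.indicator_of_mem hx, Set.indicator_of_mem hx, harg]
      norm_num
    · rw [Set.indicator_of_notMem hx, Set.indicator_of_notMem hx]
      norm_num
  have hint : ∀ i : ℕ, Integrable (Set.indicator (Set.Icc (2 * (i:ℝ)) (2 * (i:ℝ) + 1))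
      (fun y : ℝ => Complex.exp (-((π:ℂ) * Complex.I) * (y:ℂ)))) := by
    intro i
    refine (integrable_indicator_iff measurableSet_Icc).2 ?_
    exact (Continuous.integrableOn_Icc (by fun_prop))
  have key : ∀ i : ℕ, (∫ x : ℝ, Set.indicator (Set.Icc (2 * (i:ℝ)) (2 * (i:ℝ) + 1))
      (fun y : ℝ => Complex.exp (-((π:ℂ) * Complex.I) * (y:ℂ))) x)
      = 2 / ((π:ℂ) * Complex.I) := by
    intro i
    rw [integral_indicator measurableSet_Icc, integral_Icc_eq_integral_Ioc,
      ← intervalIntegral.integral_of_le (by linarith : 2 * (i:ℝ) ≤ 2 * (i:ℝ) + 1),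
      integral_exp_mul_complex (neg_ne_zero.2 hπI)]
    have e0 : Complex.exp (-((π:ℂ) * Complex.I) * ((2 * (i:ℝ) : ℝ) : ℂ)) = 1 := by
      have harg : -((π:ℂ) * Complex.I) * ((2 * (i:ℝ) : ℝ) : ℂ)
          = ((-(i:ℤ) : ℤ) : ℂ) * (2 * (π:ℂ) * Complex.I) := by push_cast; ring
      rw [harg, Complex.exp_int_mul_two_pi_mul_I]
    have e1 : Complex.exp (-((π:ℂ) * Complex.I) * ((2 * (i:ℝ) + 1 : ℝ) : ℂ)) = -1 := by
      have harg : -((π:ℂ) * Complex.I) * ((2 * (i:ℝ) + 1 : ℝ) : ℂ)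
          = ((-(i:ℤ) : ℤ) : ℂ) * (2 * (π:ℂ) * Complex.I) + -((π:ℂ) * Complex.I) := by
        push_cast; ring
      rw [harg, Complex.exp_add, Complex.exp_int_mul_two_pi_mul_I, Complex.exp_neg,
        Complex.exp_pi_mul_I]
      norm_num
    rw [e0, e1]
    rw [show (-1 - 1 : ℂ) = -2 by norm_num, neg_div_neg_eq]
  rw [fourierTransform]
  calc (∫ x : ℝ, ((crestF n x : ℝ) : ℂ) * Complex.exp (-(x * π) * Complex.I))
      = ∫ x : ℝ, ∑ i ∈ Finset.range n,
          Set.indicator (Set.Icc (2 * (i:ℝ)) (2 * (i:ℝ) + 1))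
            (fun y : ℝ => Complex.exp (-((π:ℂ) * Complex.I) * (y:ℂ))) x := by
        exact integral_congr_ae (Filter.Eventually.of_forall step1)
    _ = ∑ i ∈ Finset.range n, ∫ x : ℝ,
          Set.indicator (Set.Icc (2 * (i:ℝ)) (2 * (i:ℝ) + 1))
            (fun y : ℝ => Complex.exp (-((π:ℂ) * Complex.I) * (y:ℂ))) x :=
        integral_finset_sum _ fun i _ => hint i
    _ = ∑ _i ∈ Finset.range n, 2 / ((π:ℂ) * Complex.I) :=
        Finset.sum_congr rfl fun i _ => key i
    _ = (n:ℂ) * (2 / ((π:ℂ) * Complex.I)) := by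
        rw [Finset.sum_const, Finset.card_range, nsmul_eq_mul]

lemma dR_crestF {n : ℕ} (hn : 0 < n) {x : ℝ} (hx : x < 1) :
    decreasingRearrangement (crestF n) x = 1 := by
  have hset : {α : ℝ | 0 < α ∧ volume {t : ℝ | α < |crestF n t|} ≤ ENNReal.ofReal x}
      = Set.Ici 1 := by
    ext α
    simp only [Set.mem_setOf_eq, Set.mem_Ici]
    constructor
    · rintro ⟨hα, hvol⟩
      by_contra hlt
      push_neg at hlt
      have hsub : Set.Icc (0:ℝ) 1 ⊆ {t : ℝ | α < |crestF n t|} := by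
        intro t ht
        have h1 : crestF n t = 1 := by
          refine crestF_eq_one hn ?_
          simpa using ht
        simp only [Set.mem_setOf_eq, h1, abs_one]
        exact hlt
      have h1 : (1:ENNReal) ≤ volume {t : ℝ | α < |crestF n t|} := by
        calc (1:ENNReal) = volume (Set.Icc (0:ℝ) 1) := by simp
          _ ≤ _ := measure_mono hsub
      have h2 : ENNReal.ofReal x < 1 := ENNReal.ofReal_lt_one.2 hx
      exact absurd (le_trans h1 hvol) (not_le.2 h2)
    · intro h1
      refine ⟨lt_of_lt_of_le one_pos h1, ?_⟩
      have hemp : {t : ℝ | α < |crestF n t|} = ∅ := by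
        refine Set.eq_empty_iff_forall_notMem.2 fun t ht => ?_
        simp only [Set.mem_setOf_eq] at ht
        have h2 : |crestF n t| ≤ 1 := by
          rw [abs_of_nonneg (crestF_nonneg n t)]
          exact crestF_le_one n t
        exact absurd ht (not_lt.2 (le_trans h2 h1))
      rw [hemp]
      simp
  rw [decreasingRearrangement, hset, csInf_Ici]

/-- Example: for every `N ≥ 1` the function `f = Σ_{i=0}^{5N-1} χ_{[2i,2i+1]}`
is nonnegative, integrable, supported in `[0,∞)`, has `5N` crests, and satisfies
`|f̂(z)| / (π√10 ∫₀^{1/z} f*) > N` for some `z > 0`. -/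
theorem crest_example (N : ℕ) (hN : 0 < N) :
    ∃ f : ℝ → ℝ,
      (f = fun x => ∑ i ∈ Finset.range (5 * N),
        Set.indicator (Set.Icc (2 * (i:ℝ)) (2 * (i:ℝ) + 1)) (fun _ => (1:ℝ)) x) ∧
      Integrable f ∧ (∀ x, 0 ≤ f x) ∧ (∀ x < (0:ℝ), f x = 0) ∧
      CrestsEq f (5 * N) ∧
      ∃ z : ℝ, 0 < z ∧
        ‖fourierTransform f z‖ /
          (π * Real.sqrt 10 * ∫ x in (0:ℝ)..(1/z), decreasingRearrangement f x) > N := by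
  refine ⟨crestF (5 * N), rfl, crestF_integrable _, crestF_nonneg _,
    fun x hx => crestF_neg hx,
    ⟨hasCrestDecomp_crestF _, fun m hm => not_hasCrestDecomp_crestF hm⟩,
    π, Real.pi_pos, ?_⟩
  have h5N : 0 < 5 * N := by omega
  have habs : ‖fourierTransform (crestF (5 * N)) π‖ = 10 * N / π := by
    rw [fourier_crestF]
    rw [norm_mul, norm_div, norm_mul, Complex.norm_natCast, Complex.norm_two,
      Complex.norm_real, Complex.norm_I, Real.norm_eq_abs, abs_of_pos Real.pi_pos, mul_one]
    push_cast
    field_simp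
    ring
  have hInt : (∫ x in (0:ℝ)..(1/π), decreasingRearrangement (crestF (5 * N)) x)
      = 1 / π := by
    have hle : (0:ℝ) ≤ 1 / π := by positivity
    have heq : Set.EqOn (decreasingRearrangement (crestF (5 * N))) (fun _ => (1:ℝ))
        (Set.uIcc (0:ℝ) (1/π)) := by
      intro x hx
      rw [Set.uIcc_of_le hle] at hx
      refine dR_crestF h5N ?_
      have h1 : 1 / π < 1 := by
        rw [div_lt_one Real.pi_pos]
        linarith [Real.pi_gt_three]
      exact lt_of_le_of_lt hx.2 h1
    rw [intervalIntegral.integral_congr heq, intervalIntegral.integral_const]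
    simp
  rw [habs, hInt]
  have hden : π * Real.sqrt 10 * (1 / π) = Real.sqrt 10 := by
    field_simp
  rw [hden]
  have hsq : Real.sqrt 10 ^ 2 = 10 := Real.sq_sqrt (by norm_num)
  have hsqrt_pos : 0 < Real.sqrt 10 := Real.sqrt_pos.2 (by norm_num)
  have hπlt : π < Real.sqrt 10 := by
    have h1 : π < 3.15 := Real.pi_lt_d2
    have h2 : (3.15:ℝ) < Real.sqrt 10 := by
      rw [Real.lt_sqrt (by norm_num)]
      norm_num
    linarith
  have hN1 : (1:ℝ) ≤ (N:ℝ) := by exact_mod_cast hN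
  have hNpos : (0:ℝ) < N := lt_of_lt_of_le one_pos hN1
  have h10 : Real.sqrt 10 * π < 10 := by nlinarith
  rw [gt_iff_lt, lt_div_iff₀ hsqrt_pos, lt_div_iff₀ Real.pi_pos]
  calc (N:ℝ) * Real.sqrt 10 * π = N * (Real.sqrt 10 * π) := by ring
    _ < N * 10 := mul_lt_mul_of_pos_left h10 hNpos
    _ = 10 * N := by ring
end
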